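/- arXiv:2604.00811 — 8 statements merged into one kernel-verified Lean document; each statement's English description precedes it below -/
import Mathlib

section
/- Let (Ω,F) be a measurable space, let P0 and P1 be probability measures on it with P1 absolutely continuous with respect to P0, let r := dP1/dP0 be the Radon–Nikodym derivative and assume r is square-integrable with respect to P0. Let m0 : Ω → ℝ be square-integrable with respect to P0 and let G ⊆ F be a sub-σ-algebra. Then ∫ m0 dP1 − ∫ E_{P0}[m0 | G] dP1 = ∫ (m0 − E_{P0}[m0 | G]) · (r − E_{P0}[r | G]) dP0, where E_{P0}[· | G] denotes conditional expectation with respect to G under P0. -/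
open MeasureTheory

lemma memℒp_two_integrable_mul' {Ω : Type*} {mΩ : MeasurableSpace Ω} {μ : Measure Ω}
    {f g : Ω → ℝ} (hf : MemLp f 2 μ) (hg : MemLp g 2 μ) :
    Integrable (fun ω => f ω * g ω) μ := by
  have h := L2.integrable_inner (𝕜 := ℝ) (hf.toLp f) (hg.toLp g)
  refine h.congr ?_
  filter_upwards [hf.coeFn_toLp, hg.coeFn_toLp] with ω h1 h2
  simp [RCLike.inner_apply, h1, h2, mul_comm]

lemma memℒp_two_condexp' {Ω : Type*} {m mΩ : MeasurableSpace Ω} {μ : Measure Ω}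
    [IsFiniteMeasure μ] (hm : m ≤ mΩ)
    {f : Ω → ℝ} (hf : MemLp f 2 μ) : MemLp (μ[f|m]) 2 μ := by
  set g : Lp ℝ 2 μ := (condExpL2 ℝ ℝ hm (hf.toLp f) : Lp ℝ 2 μ) with hg
  have hae : (g : Ω → ℝ) =ᵐ[μ] μ[f|m] := by
    refine ae_eq_condExp_of_forall_setIntegral_eq hm (hf.integrable one_le_two)
      (fun s hs hμs => (integrable_condExpL2_of_isFiniteMeasure hm).integrableOn)
      (fun s hs hμs => ?_) (aestronglyMeasurable_condExpL2 hm _)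
    rw [hg, integral_condExpL2_eq hm (hf.toLp f) hs hμs.ne]
    exact setIntegral_congr_ae (hm s hs) ((hf.coeFn_toLp).mono fun x hx _ => hx)
  exact (Lp.memLp g).ae_eq hae

/-- Lemma 1 (confounding bias): for square-integrable `m0` and density ratio `r = dP1/dP0`,
`∫ m0 dP1 − ∫ E_{P0}[m0|G] dP1 = ∫ (m0 − E_{P0}[m0|G]) (r − E_{P0}[r|G]) dP0`. -/
theorem confounding_bias_eq_integral_cond_cov
    {Ω : Type*} [mΩ : MeasurableSpace Ω] (P0 P1 : Measure Ω)
    [IsProbabilityMeasure P0] [IsProbabilityMeasure P1]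
    (hac : P1 ≪ P0)
    (r : Ω → ℝ) (hr : r = fun ω => (P1.rnDeriv P0 ω).toReal)
    (hr2 : MemLp r 2 P0)
    (m0 : Ω → ℝ) (hm02 : MemLp m0 2 P0)
    (G : MeasurableSpace Ω) (hG : G ≤ mΩ) :
    ∫ ω, m0 ω ∂P1 - ∫ ω, (P0[m0|G]) ω ∂P1
      = ∫ ω, (m0 ω - (P0[m0|G]) ω) * (r ω - (P0[r|G]) ω) ∂P0 := by
  set mb : Ω → ℝ := P0[m0|G] with hmb
  set rb : Ω → ℝ := P0[r|G] with hrb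
  have hmb2 : MemLp mb 2 P0 := memℒp_two_condexp' hG hm02
  have hrb2 : MemLp rb 2 P0 := memℒp_two_condexp' hG hr2
  have hrint : Integrable r P0 := hr2.integrable one_le_two
  have hm0int : Integrable m0 P0 := hm02.integrable one_le_two
  -- change of measure
  have hA : ∫ ω, m0 ω ∂P1 = ∫ ω, r ω * m0 ω ∂P0 := by
    rw [hr]
    simp_rw [← smul_eq_mul]
    exact (integral_rnDeriv_smul hac).symm
  have hB : ∫ ω, mb ω ∂P1 = ∫ ω, r ω * mb ω ∂P0 := by
    rw [hr]
    simp_rw [← smul_eq_mul]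
    exact (integral_rnDeriv_smul hac).symm
  -- integrabilities of products
  have h1 : Integrable (fun ω => m0 ω * r ω) P0 := memℒp_two_integrable_mul' hm02 hr2
  have h2 : Integrable (fun ω => m0 ω * rb ω) P0 := memℒp_two_integrable_mul' hm02 hrb2
  have h3 : Integrable (fun ω => mb ω * r ω) P0 := memℒp_two_integrable_mul' hmb2 hr2
  have h4 : Integrable (fun ω => mb ω * rb ω) P0 := memℒp_two_integrable_mul' hmb2 hrb2
  -- pull-out property: ∫ mb * r = ∫ mb * rb
  have hmbAE : AEStronglyMeasurable[G] mb P0 :=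
    StronglyMeasurable.aestronglyMeasurable stronglyMeasurable_condExp
  have hrbAE : AEStronglyMeasurable[G] rb P0 :=
    StronglyMeasurable.aestronglyMeasurable stronglyMeasurable_condExp
  have hC : ∫ ω, mb ω * r ω ∂P0 = ∫ ω, mb ω * rb ω ∂P0 := by
    have hpull : P0[mb * r|G] =ᵐ[P0] mb * (P0[r|G]) :=
      condExp_mul_of_aestronglyMeasurable_left hmbAE h3 hrint
    calc ∫ ω, mb ω * r ω ∂P0 = ∫ ω, (P0[mb * r|G]) ω ∂P0 := (integral_condExp hG).symm
      _ = ∫ ω, (mb * (P0[r|G])) ω ∂P0 := integral_congr_ae hpull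
      _ = ∫ ω, mb ω * rb ω ∂P0 := rfl
  -- pull-out property: ∫ m0 * rb = ∫ mb * rb
  have hD : ∫ ω, m0 ω * rb ω ∂P0 = ∫ ω, mb ω * rb ω ∂P0 := by
    have h2' : Integrable (rb * m0) P0 :=
      (memℒp_two_integrable_mul' hrb2 hm02 : Integrable (fun ω => rb ω * m0 ω) P0)
    have hpull : P0[rb * m0|G] =ᵐ[P0] rb * (P0[m0|G]) :=
      condExp_mul_of_aestronglyMeasurable_left hrbAE h2' hm0int
    calc ∫ ω, m0 ω * rb ω ∂P0 = ∫ ω, (rb * m0) ω ∂P0 := by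
          refine integral_congr_ae (Filter.Eventually.of_forall fun ω => ?_)
          simp [mul_comm]
      _ = ∫ ω, (P0[rb * m0|G]) ω ∂P0 := (integral_condExp hG).symm
      _ = ∫ ω, (rb * (P0[m0|G])) ω ∂P0 := integral_congr_ae hpull
      _ = ∫ ω, mb ω * rb ω ∂P0 := by
          refine integral_congr_ae (Filter.Eventually.of_forall fun ω => ?_)
          simp [mul_comm, hmb]
  -- expand the right-hand side
  have h12 : Integrable (fun ω => m0 ω * r ω - m0 ω * rb ω) P0 := h1.sub h2
  have h34 : Integrable (fun ω => mb ω * r ω - mb ω * rb ω) P0 := h3.sub h4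
  have hexp : ∫ ω, (m0 ω - mb ω) * (r ω - rb ω) ∂P0
      = ∫ ω, m0 ω * r ω ∂P0 - ∫ ω, m0 ω * rb ω ∂P0
        - (∫ ω, mb ω * r ω ∂P0 - ∫ ω, mb ω * rb ω ∂P0) := by
    have heq : (fun ω => (m0 ω - mb ω) * (r ω - rb ω))
        = fun ω => (m0 ω * r ω - m0 ω * rb ω) - (mb ω * r ω - mb ω * rb ω) :=
      funext fun ω => by ring
    rw [heq, integral_sub h12 h34, integral_sub h1 h2, integral_sub h3 h4]
  have hE : ∫ ω, r ω * m0 ω ∂P0 = ∫ ω, m0 ω * r ω ∂P0 := by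
    refine integral_congr_ae (Filter.Eventually.of_forall fun ω => ?_)
    ring
  have hF : ∫ ω, r ω * mb ω ∂P0 = ∫ ω, mb ω * r ω ∂P0 := by
    refine integral_congr_ae (Filter.Eventually.of_forall fun ω => ?_)
    ring
  rw [hA, hB, hE, hF, hC, hexp, hC, hD]
  ring
end

section
/- Let (Ω,F) be a measurable space, let P0 and P1 be probability measures on it with P1 absolutely continuous with respect to P0, let r := dP1/dP0 be square-integrable with respect to P0, and let φ : Ω → E be a measurable map into a measurable space E. Then ∫ r² dP0 − ∫ (d(φ_*P1)/d(φ_*P0))² d(φ_*P0) = ∫ Var_{P0}(r | σ(φ)) dP0 ≥ 0, where σ(φ) is the σ-algebra generated by φ and Var_{P0}(· | σ(φ)) denotes the conditional variance under P0. In particular, the χ²-divergence between the pushforward measures φ_*P1 and φ_*P0 is at most the χ²-divergence between P1 and P0. -/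
open MeasureTheory

/-- Lemma 3, first part: the improvement in overlap divergence induced by a representation `φ`
equals the integrated conditional variance of the density ratio given `σ(φ)`, which is
nonnegative; in particular the χ²-divergence of the pushforward laws is at most the original
χ²-divergence. -/
theorem overlap_divergence_improvement
    {Ω E : Type*} [MeasurableSpace Ω] [MeasurableSpace E]
    (P0 P1 : Measure Ω) [IsProbabilityMeasure P0] [IsProbabilityMeasure P1]
    (hac : P1 ≪ P0)
    (r : Ω → ℝ) (hr : r = fun ω => (P1.rnDeriv P0 ω).toReal)
    (hr2 : MemLp r 2 P0)
    (φ : Ω → E) (hφ : Measurable φ)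
    (condVar : Ω → ℝ)
    (hcondVar : condVar =
      P0[fun ω =>
          (r ω - (P0[r | MeasurableSpace.comap φ ‹MeasurableSpace E›]) ω) ^ 2
        | MeasurableSpace.comap φ ‹MeasurableSpace E›]) :
    (∫ ω, (r ω) ^ 2 ∂P0
        - ∫ y, (((P1.map φ).rnDeriv (P0.map φ) y).toReal) ^ 2 ∂(P0.map φ)
      = ∫ ω, condVar ω ∂P0) ∧
    (0 ≤ ∫ ω, condVar ω ∂P0) ∧
    (∫ y, (((P1.map φ).rnDeriv (P0.map φ) y).toReal) ^ 2 ∂(P0.map φ)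
      ≤ ∫ ω, (r ω) ^ 2 ∂P0) := by
  have hm : MeasurableSpace.comap φ ‹MeasurableSpace E› ≤ ‹MeasurableSpace Ω› := hφ.comap_le
  haveI hprob0 : IsProbabilityMeasure (P0.map φ) := Measure.isProbabilityMeasure_map hφ.aemeasurable
  haveI hprob1 : IsProbabilityMeasure (P1.map φ) := Measure.isProbabilityMeasure_map hφ.aemeasurable
  have hacm : P1.map φ ≪ P0.map φ := hac.map hφ
  set s : E → ℝ := fun y => ((P1.map φ).rnDeriv (P0.map φ) y).toReal with hs_def
  have hs_meas : Measurable s := (Measure.measurable_rnDeriv _ _).ennreal_toReal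
  set ce : Ω → ℝ := P0[r | MeasurableSpace.comap φ ‹MeasurableSpace E›] with hce_def
  have hr_int : Integrable r P0 := hr2.integrable one_le_two
  -- the composed pushforward density ratio is a version of the conditional expectation
  have hs_int : Integrable s (P0.map φ) := Measure.integrable_toReal_rnDeriv
  have hg_int : Integrable (fun ω => s (φ ω)) P0 :=
    (integrable_map_measure hs_meas.aestronglyMeasurable hφ.aemeasurable).mp hs_int
  have hg_eq : (fun ω => s (φ ω)) =ᵐ[P0] ce := by
    refine ae_eq_condExp_of_forall_setIntegral_eq hm hr_int
      (fun t _ _ => hg_int.integrableOn) ?_ ?_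
    · rintro t ⟨u, hu, rfl⟩ _
      have h1 : ∫ x in φ ⁻¹' u, s (φ x) ∂P0 = ∫ y in u, s y ∂(P0.map φ) :=
        (setIntegral_map hu hs_meas.aestronglyMeasurable hφ.aemeasurable).symm
      have h2 : ∫ y in u, s y ∂(P0.map φ) = ((P1.map φ) u).toReal :=
        Measure.setIntegral_toReal_rnDeriv hacm u
      have h3 : ∫ x in φ ⁻¹' u, r x ∂P0 = (P1 (φ ⁻¹' u)).toReal := by
        rw [hr]; exact Measure.setIntegral_toReal_rnDeriv hac _
      rw [h1, h2, h3, Measure.map_apply hφ hu]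
    · have : Measurable[MeasurableSpace.comap φ ‹MeasurableSpace E›] (fun ω => s (φ ω)) := hs_meas.comp (comap_measurable φ)
      exact this.stronglyMeasurable.aestronglyMeasurable
  -- the conditional expectation is square integrable, via `condexpL2`
  have hce2 : MemLp ce 2 P0 := by
    set F : Lp ℝ 2 P0 := hr2.toLp r with hF_def
    have hG_eq : (↑(condExpL2 ℝ ℝ hm F) : Ω → ℝ) =ᵐ[P0] ce := by
      refine ae_eq_condExp_of_forall_setIntegral_eq hm hr_int
        (fun t _ _ => (integrable_condExpL2_of_isFiniteMeasure hm).integrableOn) ?_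
        (aestronglyMeasurable_condExpL2 hm F)
      intro t ht _
      rw [integral_condExpL2_eq hm F ht (measure_ne_top _ _)]
      exact setIntegral_congr_ae (hm t ht)
        ((MemLp.coeFn_toLp hr2).mono fun x hx _ => hx)
    exact (Lp.memLp _).ae_eq hG_eq
  have hce_int : Integrable ce P0 := integrable_condExp
  have hr2i : Integrable (fun ω => r ω ^ 2) P0 := hr2.integrable_sq
  have hce2i : Integrable (fun ω => ce ω ^ 2) P0 := hce2.integrable_sq
  have hsum : Integrable (fun ω => (r ω + ce ω) ^ 2) P0 := (hr2.add hce2).integrable_sq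
  have hmul : Integrable (fun ω => ce ω * r ω) P0 := by
    have h : (fun ω => ce ω * r ω)
        = fun ω => ((r ω + ce ω) ^ 2 - r ω ^ 2 - ce ω ^ 2) / 2 := by
      funext ω; ring
    rw [h]; exact ((hsum.sub hr2i).sub hce2i).div_const 2
  have hsub2 : Integrable (fun ω => (r ω - ce ω) ^ 2) P0 := (hr2.sub hce2).integrable_sq
  -- projection property : ∫ ce * r = ∫ ce ^ 2
  have hproj : ∫ ω, ce ω * r ω ∂P0 = ∫ ω, ce ω ^ 2 ∂P0 := by
    have h1 : P0[ce * r | MeasurableSpace.comap φ ‹MeasurableSpace E›] =ᵐ[P0] ce * P0[r | MeasurableSpace.comap φ ‹MeasurableSpace E›] :=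
      condExp_mul_of_stronglyMeasurable_left stronglyMeasurable_condExp hmul hr_int
    calc ∫ ω, ce ω * r ω ∂P0 = ∫ ω, (P0[ce * r | MeasurableSpace.comap φ ‹MeasurableSpace E›]) ω ∂P0 := (integral_condExp hm).symm
      _ = ∫ ω, (ce * P0[r | MeasurableSpace.comap φ ‹MeasurableSpace E›]) ω ∂P0 := integral_congr_ae h1
      _ = ∫ ω, ce ω ^ 2 ∂P0 := by simp_rw [Pi.mul_apply, ← hce_def, sq]
  -- conditional variance identity
  have hcv : ∫ ω, condVar ω ∂P0 = ∫ ω, (r ω - ce ω) ^ 2 ∂P0 := by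
    rw [hcondVar]; exact integral_condExp hm
  have hexp : ∫ ω, (r ω - ce ω) ^ 2 ∂P0 = ∫ ω, r ω ^ 2 ∂P0 - ∫ ω, ce ω ^ 2 ∂P0 := by
    have h : (fun ω => (r ω - ce ω) ^ 2)
        = fun ω => r ω ^ 2 - 2 * (ce ω * r ω) + ce ω ^ 2 := by
      funext ω; ring
    have hB : Integrable (fun ω => 2 * (ce ω * r ω)) P0 := hmul.const_mul 2
    have hA : Integrable (fun ω => r ω ^ 2 - 2 * (ce ω * r ω)) P0 := hr2i.sub hB
    rw [h, integral_add hA hce2i, integral_sub hr2i hB, MeasureTheory.integral_const_mul, hproj]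
    ring
  -- pushforward integral equals ∫ ce ^ 2
  have hmap : ∫ y, s y ^ 2 ∂(P0.map φ) = ∫ ω, ce ω ^ 2 ∂P0 := by
    rw [integral_map hφ.aemeasurable (hs_meas.pow_const 2).aestronglyMeasurable]
    exact integral_congr_ae (hg_eq.mono fun ω h => by simp only [h])
  have h1 : ∫ ω, (r ω) ^ 2 ∂P0 - ∫ y, s y ^ 2 ∂(P0.map φ) = ∫ ω, condVar ω ∂P0 := by
    rw [hmap, hcv, hexp]
  have h2 : 0 ≤ ∫ ω, condVar ω ∂P0 := by
    rw [hcondVar]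
    exact integral_nonneg_of_ae (condExp_nonneg (Filter.Eventually.of_forall fun ω => sq_nonneg _))
  exact ⟨h1, h2, by linarith⟩
end

section
/- Let (Ω,F) be a measurable space, let P0 and P1 be probability measures on it with P1 absolutely continuous with respect to P0, let r := dP1/dP0 be square-integrable with respect to P0, let m0 : Ω → ℝ be square-integrable with respect to P0, and let φ : Ω → E be a measurable map into a measurable space E. Then |∫ m0 dP1 − ∫ E_{P0}[m0 | σ(φ)] dP1| ≤ sqrt( ∫ Var_{P0}(m0 | σ(φ)) dP0 ) · sqrt( ∫ r² dP0 − ∫ (d(φ_*P1)/d(φ_*P0))² d(φ_*P0) ), where σ(φ) is the σ-algebra generated by φ, E_{P0}[· | σ(φ)] is conditional expectation and Var_{P0}(· | σ(φ)) conditional variance under P0, and φ_*P denotes pushforward of a measure P under φ. -/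
open MeasureTheory

private lemma integrable_mul_of_memL2 {α : Type*} {mα : MeasurableSpace α} {μ : Measure α}
    {f g : α → ℝ} (hf : MemLp f 2 μ) (hg : MemLp g 2 μ) :
    Integrable (fun x => f x * g x) μ := by
  refine ((hf.integrable_sq.add hg.integrable_sq).const_mul (1 / 2 : ℝ)).mono'
    (hf.aestronglyMeasurable.mul hg.aestronglyMeasurable) ?_
  filter_upwards with x
  simp only [Real.norm_eq_abs, Pi.add_apply]
  rw [abs_mul]
  nlinarith [sq_nonneg (|f x| - |g x|), sq_abs (f x), sq_abs (g x)]

private lemma memL2_condexp {α : Type*} {m m0 : MeasurableSpace α} (hm : m ≤ m0)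
    {μ : Measure α} [IsFiniteMeasure μ] {f : α → ℝ} (hf : MemLp f 2 μ) :
    MemLp (μ[f|m]) 2 μ := by
  have h : (condExpL2 ℝ ℝ hm (hf.toLp f) : α → ℝ) =ᵐ[μ] μ[f|m] := by
    refine ae_eq_condExp_of_forall_setIntegral_eq hm (hf.integrable one_le_two)
      (fun s hs hμs => integrableOn_condExpL2_of_measure_ne_top hm hμs.ne _)
      (fun s hs hμs => ?_) (aestronglyMeasurable_condExpL2 hm _)
    rw [integral_condExpL2_eq hm (hf.toLp f) hs hμs.ne]
    exact setIntegral_congr_ae (hm s hs) ((hf.coeFn_toLp).mono fun x hx _ => hx)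
  exact (Lp.memLp _).ae_eq h

private lemma integral_sub_condexp_mul {α : Type*} {m mα : MeasurableSpace α} (hm : m ≤ mα)
    {μ : Measure α} [IsProbabilityMeasure μ] {f h : α → ℝ}
    (hf : MemLp f 2 μ) (hh : MemLp h 2 μ) (hhm : StronglyMeasurable[m] h) :
    ∫ x, (f x - (μ[f|m]) x) * h x ∂μ = 0 := by
  have hg : MemLp (μ[f|m]) 2 μ := memL2_condexp hm hf
  have hd : MemLp (fun x => f x - (μ[f|m]) x) 2 μ := hf.sub hg
  have hint : Integrable (h * fun x => f x - (μ[f|m]) x) μ := by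
    have := integrable_mul_of_memL2 hh hd
    exact this
  have hdint : Integrable (fun x => f x - (μ[f|m]) x) μ := hd.integrable one_le_two
  have hpull := condExp_mul_of_stronglyMeasurable_left (μ := μ) hhm hint hdint
  have hzero : μ[fun x => f x - (μ[f|m]) x|m] =ᵐ[μ] 0 := by
    have h1 := condExp_sub (m := m) (hf.integrable one_le_two) (hg.integrable one_le_two)
    have h2 : μ[μ[f|m]|m] = μ[f|m] :=
      condExp_of_stronglyMeasurable hm stronglyMeasurable_condExp (hg.integrable one_le_two)
    refine h1.trans ?_
    rw [h2]
    filter_upwards with x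
    simp
  have hcomm : ∫ x, (f x - (μ[f|m]) x) * h x ∂μ
      = ∫ x, (h * fun x => f x - (μ[f|m]) x) x ∂μ := by
    refine integral_congr_ae (Filter.Eventually.of_forall fun x => ?_)
    simp [Pi.mul_apply, mul_comm]
  rw [hcomm, ← integral_condExp hm (f := h * fun x => f x - (μ[f|m]) x) (μ := μ)]
  have : μ[h * fun x => f x - (μ[f|m]) x|m] =ᵐ[μ] 0 := by
    refine hpull.trans ?_
    filter_upwards [hzero] with x hx
    simp [Pi.mul_apply, hx, Pi.zero_apply]
  rw [integral_congr_ae this]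
  simp

private lemma abs_integral_mul_le {α : Type*} {mα : MeasurableSpace α} {μ : Measure α}
    {f g : α → ℝ} (hf : MemLp f 2 μ) (hg : MemLp g 2 μ) :
    |∫ x, f x * g x ∂μ| ≤ Real.sqrt (∫ x, f x ^ 2 ∂μ) * Real.sqrt (∫ x, g x ^ 2 ∂μ) := by
  have h2 : ENNReal.ofReal (2 : ℝ) = 2 := by norm_num
  have hfa : MemLp (fun x => |f x|) (ENNReal.ofReal 2) μ := by rw [h2]; exact hf.abs
  have hga : MemLp (fun x => |g x|) (ENNReal.ofReal 2) μ := by rw [h2]; exact hg.abs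
  have hpq : Real.HolderConjugate 2 2 := Real.HolderConjugate.two_two
  have hH := integral_mul_le_Lp_mul_Lq_of_nonneg hpq
    (f := fun x => |f x|) (g := fun x => |g x|)
    (Filter.Eventually.of_forall fun x => abs_nonneg _)
    (Filter.Eventually.of_forall fun x => abs_nonneg _) hfa hga
  have hconv : ∀ (u : α → ℝ), ∫ x, |u x| ^ (2 : ℝ) ∂μ = ∫ x, u x ^ 2 ∂μ := by
    intro u
    refine integral_congr_ae (Filter.Eventually.of_forall fun x => ?_)
    show |u x| ^ (2 : ℝ) = u x ^ 2
    rw [show (2 : ℝ) = ((2 : ℕ) : ℝ) by norm_num, Real.rpow_natCast, sq_abs]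
  calc |∫ x, f x * g x ∂μ| ≤ ∫ x, |f x| * |g x| ∂μ := by
        simpa [Real.norm_eq_abs, abs_mul] using
          norm_integral_le_integral_norm (fun x => f x * g x) (μ := μ)
    _ ≤ (∫ x, |f x| ^ (2 : ℝ) ∂μ) ^ (1 / 2 : ℝ) * (∫ x, |g x| ^ (2 : ℝ) ∂μ) ^ (1 / 2 : ℝ) := hH
    _ = Real.sqrt (∫ x, f x ^ 2 ∂μ) * Real.sqrt (∫ x, g x ^ 2 ∂μ) := by
        rw [hconv f, hconv g, Real.sqrt_eq_rpow, Real.sqrt_eq_rpow]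

private lemma condexp_rnDeriv_comap {Ω E : Type*} [MeasurableSpace Ω] [MeasurableSpace E]
    (P0 P1 : Measure Ω) [IsProbabilityMeasure P0] [IsProbabilityMeasure P1]
    (hac : P1 ≪ P0) (φ : Ω → E) (hφ : Measurable φ) :
    (fun ω => ((P1.map φ).rnDeriv (P0.map φ) (φ ω)).toReal)
      =ᵐ[P0] P0[(fun ω => (P1.rnDeriv P0 ω).toReal) | MeasurableSpace.comap φ ‹MeasurableSpace E›] := by
  have hm : MeasurableSpace.comap φ ‹MeasurableSpace E› ≤ ‹MeasurableSpace Ω› := hφ.comap_le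
  haveI : IsProbabilityMeasure (P0.map φ) := Measure.isProbabilityMeasure_map hφ.aemeasurable
  haveI : IsProbabilityMeasure (P1.map φ) := Measure.isProbabilityMeasure_map hφ.aemeasurable
  have hmapac : P1.map φ ≪ P0.map φ := hac.map hφ
  have hρ : Measurable fun y => ((P1.map φ).rnDeriv (P0.map φ) y).toReal :=
    (Measure.measurable_rnDeriv _ _).ennreal_toReal
  have hint : Integrable (fun ω => ((P1.map φ).rnDeriv (P0.map φ) (φ ω)).toReal) P0 :=
    (integrable_map_measure hρ.aestronglyMeasurable hφ.aemeasurable).mp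
      Measure.integrable_toReal_rnDeriv
  refine ae_eq_condExp_of_forall_setIntegral_eq hm Measure.integrable_toReal_rnDeriv
    (fun s _ _ => hint.integrableOn) ?_ ?_
  · rintro s ⟨t, ht, rfl⟩ _
    rw [← setIntegral_map ht hρ.aestronglyMeasurable hφ.aemeasurable,
      Measure.setIntegral_toReal_rnDeriv hmapac t, map_measureReal_apply hφ ht,
      Measure.setIntegral_toReal_rnDeriv hac (φ ⁻¹' t)]
  · exact ((hρ.comp (measurable_iff_comap_le.mpr le_rfl)).stronglyMeasurable).aestronglyMeasurable

/-- Lemma 3, second part: the absolute confounding bias of adjusting on a representation `φ`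
is bounded by the square root of the prognostic score error times the square root of the
improvement in overlap divergence. -/
theorem abs_confounding_bias_le
    {Ω E : Type*} [MeasurableSpace Ω] [MeasurableSpace E]
    (P0 P1 : Measure Ω) [IsProbabilityMeasure P0] [IsProbabilityMeasure P1]
    (hac : P1 ≪ P0)
    (r : Ω → ℝ) (hr : r = fun ω => (P1.rnDeriv P0 ω).toReal)
    (hr2 : MemLp r 2 P0)
    (m0 : Ω → ℝ) (hm02 : MemLp m0 2 P0)
    (φ : Ω → E) (hφ : Measurable φ)
    (condVarM0 : Ω → ℝ)
    (hcondVarM0 : condVarM0 =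
      P0[fun ω =>
          (m0 ω - (P0[m0 | MeasurableSpace.comap φ ‹MeasurableSpace E›]) ω) ^ 2
        | MeasurableSpace.comap φ ‹MeasurableSpace E›]) :
    |∫ ω, m0 ω ∂P1
        - ∫ ω, (P0[m0 | MeasurableSpace.comap φ ‹MeasurableSpace E›]) ω ∂P1|
      ≤ Real.sqrt (∫ ω, condVarM0 ω ∂P0)
        * Real.sqrt (∫ ω, (r ω) ^ 2 ∂P0
            - ∫ y, (((P1.map φ).rnDeriv (P0.map φ) y).toReal) ^ 2 ∂(P0.map φ)) := by
  have hm : MeasurableSpace.comap φ ‹MeasurableSpace E› ≤ ‹MeasurableSpace Ω› := hφ.comap_le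
  have key : (fun ω => ((P1.map φ).rnDeriv (P0.map φ) (φ ω)).toReal)
      =ᵐ[P0] P0[r | MeasurableSpace.comap φ ‹MeasurableSpace E›] := by
    rw [hr]; exact condexp_rnDeriv_comap P0 P1 hac φ hφ
  have hρ : Measurable fun y => ((P1.map φ).rnDeriv (P0.map φ) y).toReal :=
    (Measure.measurable_rnDeriv _ _).ennreal_toReal
  have hmap : ∫ y, (((P1.map φ).rnDeriv (P0.map φ) y).toReal) ^ 2 ∂(P0.map φ)
      = ∫ ω, (P0[r | MeasurableSpace.comap φ ‹MeasurableSpace E›]) ω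
          * (P0[r | MeasurableSpace.comap φ ‹MeasurableSpace E›]) ω ∂P0 := by
    rw [integral_map hφ.aemeasurable ((hρ.pow_const 2).aestronglyMeasurable)]
    refine integral_congr_ae (key.mono fun ω hω => ?_)
    simp only [hω]
    ring
  set m := MeasurableSpace.comap φ ‹MeasurableSpace E› with hmdef
  set g : Ω → ℝ := P0[m0|m] with hgdef
  set rb : Ω → ℝ := P0[r|m] with hrbdef
  set d : Ω → ℝ := fun ω => m0 ω - g ω with hddef
  set e : Ω → ℝ := fun ω => r ω - rb ω with hedef
  have hg2 : MemLp g 2 P0 := memL2_condexp hm hm02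
  have hrb2 : MemLp rb 2 P0 := memL2_condexp hm hr2
  have hd2 : MemLp d 2 P0 := hm02.sub hg2
  have he2 : MemLp e 2 P0 := hr2.sub hrb2
  -- integrabilities
  have i_rm0 : Integrable (fun ω => r ω * m0 ω) P0 := integrable_mul_of_memL2 hr2 hm02
  have i_rg : Integrable (fun ω => r ω * g ω) P0 := integrable_mul_of_memL2 hr2 hg2
  have i_dr : Integrable (fun ω => d ω * r ω) P0 := integrable_mul_of_memL2 hd2 hr2
  have i_drb : Integrable (fun ω => d ω * rb ω) P0 := integrable_mul_of_memL2 hd2 hrb2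
  have i_er : Integrable (fun ω => e ω * r ω) P0 := integrable_mul_of_memL2 he2 hr2
  have i_erb : Integrable (fun ω => e ω * rb ω) P0 := integrable_mul_of_memL2 he2 hrb2
  have i_rr : Integrable (fun ω => r ω * r ω) P0 := integrable_mul_of_memL2 hr2 hr2
  have i_rrb : Integrable (fun ω => r ω * rb ω) P0 := integrable_mul_of_memL2 hr2 hrb2
  have i_rbrb : Integrable (fun ω => rb ω * rb ω) P0 := integrable_mul_of_memL2 hrb2 hrb2
  -- step A: the bias as an integral under P0
  have hsm : ∀ f : Ω → ℝ, ∫ ω, f ω ∂P1 = ∫ ω, r ω * f ω ∂P0 := by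
    intro f
    rw [hr]
    simpa [smul_eq_mul] using (integral_rnDeriv_smul hac (f := f)).symm
  have hA : ∫ ω, m0 ω ∂P1 - ∫ ω, g ω ∂P1 = ∫ ω, d ω * r ω ∂P0 := by
    rw [hsm m0, hsm g, ← integral_sub i_rm0 i_rg]
    refine integral_congr_ae (Filter.Eventually.of_forall fun ω => ?_)
    simp only [hddef]
    ring
  -- orthogonality
  have horth1 : ∫ ω, d ω * rb ω ∂P0 = 0 :=
    integral_sub_condexp_mul hm hm02 hrb2 stronglyMeasurable_condExp
  have horth2 : ∫ ω, e ω * rb ω ∂P0 = 0 :=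
    integral_sub_condexp_mul hm hr2 hrb2 stronglyMeasurable_condExp
  -- step B : replace r by e in the bias
  have hB : ∫ ω, d ω * r ω ∂P0 = ∫ ω, d ω * e ω ∂P0 := by
    have h1 : ∫ ω, d ω * e ω ∂P0 = ∫ ω, d ω * r ω ∂P0 - ∫ ω, d ω * rb ω ∂P0 := by
      rw [← integral_sub i_dr i_drb]
      refine integral_congr_ae (Filter.Eventually.of_forall fun ω => ?_)
      simp only [hedef]
      ring
    rw [h1, horth1, sub_zero]
  -- ∫ r * rb = ∫ rb * rb
  have hcross : ∫ ω, r ω * rb ω ∂P0 = ∫ ω, rb ω * rb ω ∂P0 := by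
    have h1 : ∫ ω, e ω * rb ω ∂P0 = ∫ ω, r ω * rb ω ∂P0 - ∫ ω, rb ω * rb ω ∂P0 := by
      rw [← integral_sub i_rrb i_rbrb]
      refine integral_congr_ae (Filter.Eventually.of_forall fun ω => ?_)
      simp only [hedef]
      ring
    have := horth2
    rw [h1] at this
    linarith
  -- ∫ e² = ∫ r² - ∫ rb²
  have i_rbr : Integrable (fun ω => rb ω * r ω) P0 := integrable_mul_of_memL2 hrb2 hr2
  have hEsq : ∫ ω, e ω ^ 2 ∂P0 = ∫ ω, r ω * r ω ∂P0 - ∫ ω, rb ω * rb ω ∂P0 := by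
    have h1 : ∫ ω, e ω ^ 2 ∂P0 = ∫ ω, e ω * r ω ∂P0 - ∫ ω, e ω * rb ω ∂P0 := by
      rw [← integral_sub i_er i_erb]
      refine integral_congr_ae (Filter.Eventually.of_forall fun ω => ?_)
      simp only [hedef]
      ring
    have h2 : ∫ ω, e ω * r ω ∂P0 = ∫ ω, r ω * r ω ∂P0 - ∫ ω, rb ω * r ω ∂P0 := by
      rw [← integral_sub i_rr i_rbr]
      refine integral_congr_ae (Filter.Eventually.of_forall fun ω => ?_)
      simp only [hedef]
      ring
    have h3 : ∫ ω, rb ω * r ω ∂P0 = ∫ ω, r ω * rb ω ∂P0 := by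
      refine integral_congr_ae (Filter.Eventually.of_forall fun ω => ?_)
      ring
    rw [h1, h2, h3, hcross, horth2]
    ring
  -- ∫ d² = ∫ condVar
  have hcondVar : ∫ ω, condVarM0 ω ∂P0 = ∫ ω, d ω ^ 2 ∂P0 := by
    rw [hcondVarM0]
    exact integral_condExp hm
  -- conclusion
  have hsq : ∫ ω, (r ω) ^ 2 ∂P0 = ∫ ω, r ω * r ω ∂P0 := by
    refine integral_congr_ae (Filter.Eventually.of_forall fun ω => ?_)
    ring
  have hmain : |∫ ω, m0 ω ∂P1 - ∫ ω, g ω ∂P1|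
      ≤ Real.sqrt (∫ ω, d ω ^ 2 ∂P0) * Real.sqrt (∫ ω, e ω ^ 2 ∂P0) := by
    rw [hA, hB]
    exact abs_integral_mul_le hd2 he2
  rw [hcondVar, hmap, hsq, ← hEsq]
  exact hmain
end

section
/- Let d ≥ 2 and let α, β be unit vectors in the Euclidean space ℝ^d with inner product ⟪·,·⟫ such that ⟪α,β⟫ ∈ (−1,1). For a unit vector γ ∈ ℝ^d, the identity ⟪α,γ⟫·⟪γ,β⟫ = ⟪α,β⟫ holds if and only if there exist real numbers w1, w2 and a vector n ∈ ℝ^d such that γ = w1·(α+β)/sqrt(2+2⟪α,β⟫) + w2·(α−β)/sqrt(2−2⟪α,β⟫) + n, with (1+⟪α,β⟫)·w1² − (1−⟪α,β⟫)·w2² = 2⟪α,β⟫, w1² + w2² ≤ 1, ⟪n,α⟫ = 0, ⟪n,β⟫ = 0 and ‖n‖ = sqrt(1 − w1² − w2²). -/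
open scoped RealInnerProductSpace

/-- Theorem 1, algebraic core: for unit vectors `α, β` with `⟪α,β⟫ ∈ (−1,1)`, a unit vector `γ`
satisfies `⟪α,γ⟫⟪γ,β⟫ = ⟪α,β⟫` iff it decomposes along the hyperbola in the span of `α, β`
plus an orthogonal component. -/
theorem deconfounding_hyperbola_characterization
    {d : ℕ} (hd : 2 ≤ d)
    (α β : EuclideanSpace ℝ (Fin d)) (hα : ‖α‖ = 1) (hβ : ‖β‖ = 1)
    (hαβ : ⟪α, β⟫ ∈ Set.Ioo (-1 : ℝ) 1)
    (γ : EuclideanSpace ℝ (Fin d)) (hγ : ‖γ‖ = 1) :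
    ⟪α, γ⟫ * ⟪γ, β⟫ = ⟪α, β⟫ ↔
      ∃ (w1 w2 : ℝ) (n : EuclideanSpace ℝ (Fin d)),
        γ = w1 • ((Real.sqrt (2 + 2 * ⟪α, β⟫))⁻¹ • (α + β))
            + w2 • ((Real.sqrt (2 - 2 * ⟪α, β⟫))⁻¹ • (α - β)) + n ∧
        (1 + ⟪α, β⟫) * w1 ^ 2 - (1 - ⟪α, β⟫) * w2 ^ 2 = 2 * ⟪α, β⟫ ∧
        w1 ^ 2 + w2 ^ 2 ≤ 1 ∧
        ⟪n, α⟫ = 0 ∧ ⟪n, β⟫ = 0 ∧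
        ‖n‖ = Real.sqrt (1 - w1 ^ 2 - w2 ^ 2) := by
  obtain ⟨hc1, hc2⟩ := hαβ
  set c := ⟪α, β⟫ with hc
  have ha2 : (0:ℝ) < 2 + 2 * c := by linarith
  have hb2 : (0:ℝ) < 2 - 2 * c := by linarith
  set a := Real.sqrt (2 + 2 * c) with ha
  set b := Real.sqrt (2 - 2 * c) with hb
  have haa : a ^ 2 = 2 + 2 * c := Real.sq_sqrt ha2.le
  have hbb : b ^ 2 = 2 - 2 * c := Real.sq_sqrt hb2.le
  have ha0 : a ≠ 0 := (Real.sqrt_pos.mpr ha2).ne'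
  have hb0 : b ≠ 0 := (Real.sqrt_pos.mpr hb2).ne'
  have hainv : (a⁻¹) ^ 2 = (2 + 2 * c)⁻¹ := by rw [inv_pow, haa]
  have hbinv : (b⁻¹) ^ 2 = (2 - 2 * c)⁻¹ := by rw [inv_pow, hbb]
  have hαα : ⟪α, α⟫ = 1 := by
    rw [real_inner_self_eq_norm_sq, hα]; norm_num
  have hββ : ⟪β, β⟫ = 1 := by
    rw [real_inner_self_eq_norm_sq, hβ]; norm_num
  have hγγ : ⟪γ, γ⟫ = 1 := by
    rw [real_inner_self_eq_norm_sq, hγ]; norm_num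
  have hβα : ⟪β, α⟫ = c := (real_inner_comm β α).symm
  constructor
  · intro h
    set p := ⟪α, γ⟫ with hp
    set q := ⟪β, γ⟫ with hq
    have hγα : ⟪γ, α⟫ = p := real_inner_comm α γ
    have hγβ : ⟪γ, β⟫ = q := real_inner_comm β γ
    rw [hγβ] at h
    set w1 : ℝ := a⁻¹ * (p + q) with hw1
    set w2 : ℝ := b⁻¹ * (p - q) with hw2
    set n : EuclideanSpace ℝ (Fin d) :=
      γ - w1 • (a⁻¹ • (α + β)) - w2 • (b⁻¹ • (α - β)) with hn
    have e1 : a⁻¹ * (p + q) * (a⁻¹ * (1 + c)) = (p + q) * (1 + c) * (a⁻¹)^2 := by ring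
    have e2 : b⁻¹ * (p - q) * (b⁻¹ * (1 - c)) = (p - q) * (1 - c) * (b⁻¹)^2 := by ring
    have hnα : ⟪n, α⟫ = 0 := by
      rw [hn]
      simp only [inner_sub_left, real_inner_smul_left, inner_add_left, hγα, hαα, hβα]
      rw [hw1, hw2, e1, e2, hainv, hbinv]
      field_simp [show (1:ℝ) + c ≠ 0 by linarith, show (1:ℝ) - c ≠ 0 by linarith]
      ring
    have hnβ : ⟪n, β⟫ = 0 := by
      rw [hn]
      simp only [inner_sub_left, real_inner_smul_left, inner_add_left, hγβ, hββ, ← hc]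
      rw [hw1, hw2]
      have e3 : a⁻¹ * (p + q) * (a⁻¹ * (c + 1)) = (p + q) * (c + 1) * (a⁻¹)^2 := by ring
      have e4 : b⁻¹ * (p - q) * (b⁻¹ * (c - 1)) = (p - q) * (c - 1) * (b⁻¹)^2 := by ring
      rw [e3, e4, hainv, hbinv]
      field_simp [show (1:ℝ) + c ≠ 0 by linarith, show (1:ℝ) - c ≠ 0 by linarith]
      ring
    have hnn : ⟪n, n⟫ = 1 - w1 ^ 2 - w2 ^ 2 := by
      have step1 : ⟪n, n⟫ = ⟪n, γ⟫ - w1 * (a⁻¹ * (⟪n,α⟫ + ⟪n,β⟫))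
          - w2 * (b⁻¹ * (⟪n,α⟫ - ⟪n,β⟫)) := by
        nth_rewrite 2 [hn]
        simp only [inner_sub_right, real_inner_smul_right, inner_add_right]
      rw [step1, hnα, hnβ]
      have step2 : ⟪n, γ⟫ = 1 - w1 * (a⁻¹ * (p + q)) - w2 * (b⁻¹ * (p - q)) := by
        rw [hn]
        simp only [inner_sub_left, real_inner_smul_left, inner_add_left, hγγ, ← hp, ← hq]
      rw [step2, hw1, hw2]
      ring
    have hnorm2 : ‖n‖ ^ 2 = 1 - w1 ^ 2 - w2 ^ 2 := by
      rw [← real_inner_self_eq_norm_sq]; exact hnn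
    have hle : w1 ^ 2 + w2 ^ 2 ≤ 1 := by nlinarith [sq_nonneg ‖n‖]
    refine ⟨w1, w2, n, ?_, ?_, hle, hnα, hnβ, ?_⟩
    · rw [hn]; abel
    · rw [hw1, hw2, mul_pow, mul_pow, hainv, hbinv]
      field_simp [show (1:ℝ) + c ≠ 0 by linarith, show (1:ℝ) - c ≠ 0 by linarith]
      linear_combination 4 * h
    · rw [← hnorm2, Real.sqrt_sq (norm_nonneg n)]
  · rintro ⟨w1, w2, n, hγd, hhyp, -, hnα, hnβ, -⟩
    have hαn : ⟪α, n⟫ = 0 := by rw [real_inner_comm]; exact hnα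
    have hαγ : ⟪α, γ⟫ = w1 * (a⁻¹ * (1 + c)) + w2 * (b⁻¹ * (1 - c)) := by
      rw [hγd]
      simp only [inner_add_right, inner_sub_right, real_inner_smul_right, hαα, hαn, ← hc]
      ring
    have hγβ : ⟪γ, β⟫ = w1 * (a⁻¹ * (1 + c)) - w2 * (b⁻¹ * (1 - c)) := by
      rw [hγd]
      simp only [inner_add_left, inner_sub_left, real_inner_smul_left, hββ, hβα, hnβ]
      ring
    rw [hαγ, hγβ]
    have e : (w1 * (a⁻¹ * (1 + c)) + w2 * (b⁻¹ * (1 - c))) *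
        (w1 * (a⁻¹ * (1 + c)) - w2 * (b⁻¹ * (1 - c)))
        = w1^2 * (1+c)^2 * (a⁻¹)^2 - w2^2 * (1-c)^2 * (b⁻¹)^2 := by ring
    rw [e, hainv, hbinv]
    field_simp [show (1:ℝ) + c ≠ 0 by linarith, show (1:ℝ) - c ≠ 0 by linarith]
    linear_combination hhyp
end

section
/- Let μ ∈ ℝ, σ > 0 and λ ∈ ℝ with 2λσ² < 1, and let Z be distributed according to the real Gaussian measure N(0,1). Then E[|Z| · exp(λ(μ + σZ)²)] ≤ exp(λμ²/(1 − 2λσ²)) · ( (1 − 2λσ²)^{−1/2} + (1 − 2λσ²)^{−3/2} + 4λ²σ²μ² · (1 − 2λσ²)^{−5/2} ). -/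
open MeasureTheory ProbabilityTheory
section Aux
open Real Set
open scoped ENNReal NNReal

lemma aux_int_x_exp (c : ℝ) : ∫ x : ℝ, x * Real.exp (-c * x ^ 2) = 0 := by
  have h := integral_neg_eq_self (fun x : ℝ => x * Real.exp (-c * x ^ 2)) (volume : Measure ℝ)
  simp only [neg_sq, neg_mul, integral_neg] at h
  simp only [neg_mul]
  linarith

lemma aux_integrable_sq_exp {c : ℝ} (hc : 0 < c) :
    Integrable (fun x : ℝ => x ^ 2 * Real.exp (-c * x ^ 2)) := by
  have h := integrable_rpow_mul_exp_neg_mul_sq hc (s := 2) (by norm_num)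
  have h2 : ∀ x : ℝ, x ^ (2:ℝ) = x ^ 2 := fun x => by
    rw [show (2:ℝ) = ((2:ℕ):ℝ) by norm_num, Real.rpow_natCast]
  simpa [h2] using h

lemma aux_int_sq_exp {c : ℝ} (hc : 0 < c) :
    ∫ x : ℝ, x ^ 2 * Real.exp (-c * x ^ 2) = 1 / (2 * c) * Real.sqrt (π / c) := by
  have hint := aux_integrable_sq_exp hc
  have hsplit := intervalIntegral.integral_Iic_add_Ioi (b := (0:ℝ))
    hint.integrableOn hint.integrableOn
  have heven : ∫ x in Iic (0:ℝ), x ^ 2 * Real.exp (-c * x ^ 2)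
      = ∫ x in Ioi (0:ℝ), x ^ 2 * Real.exp (-c * x ^ 2) := by
    have := integral_comp_neg_Iic (c := (0:ℝ)) (fun x : ℝ => x ^ 2 * Real.exp (-c * x ^ 2))
    simp only [neg_sq, neg_zero] at this
    rw [this]
    try rw [integral_Ici_eq_integral_Ioi]
  have hIoi : ∫ x in Ioi (0:ℝ), x ^ 2 * Real.exp (-c * x ^ 2)
      = c ^ (-(2 + 1) / 2 : ℝ) * (1 / 2) * Real.Gamma ((2 + 1) / 2) := by
    rw [← integral_rpow_mul_exp_neg_mul_rpow (by norm_num) (by norm_num : (-1:ℝ) < 2) hc]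
    refine setIntegral_congr_fun measurableSet_Ioi fun x hx => ?_
    norm_num [Real.rpow_natCast]
  have hG : Real.Gamma ((2 + 1) / 2 : ℝ) = Real.sqrt π / 2 := by
    rw [show ((2 + 1) / 2 : ℝ) = 1 / 2 + 1 by norm_num, Real.Gamma_add_one (by norm_num),
      Real.Gamma_one_half_eq]
    ring
  have hpow : c ^ (-(2 + 1) / 2 : ℝ) = (c * Real.sqrt c)⁻¹ := by
    rw [show (-(2 + 1) / 2 : ℝ) = -(1 + 1/2) by norm_num, Real.rpow_neg hc.le,
      Real.rpow_add hc, Real.rpow_one, ← Real.sqrt_eq_rpow]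
  have hs : Real.sqrt (π / c) = Real.sqrt π / Real.sqrt c := Real.sqrt_div pi_pos.le c
  have hsc : 0 < Real.sqrt c := Real.sqrt_pos.mpr hc
  rw [← hsplit, heven, hIoi, hG, hpow, hs]
  field_simp
  ring

lemma aux_integral_gaussianReal (f : ℝ → ℝ) :
    ∫ x, f x ∂(gaussianReal 0 1) = ∫ x, gaussianPDFReal 0 1 x * f x := by
  rw [gaussianReal_of_var_ne_zero 0 one_ne_zero]
  unfold gaussianPDF
  have : ∀ x : ℝ, ENNReal.ofReal (gaussianPDFReal 0 1 x)
      = ((gaussianPDFReal 0 1 x).toNNReal : ℝ≥0∞) := fun x => rfl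
  simp_rw [this]
  rw [integral_withDensity_eq_integral_smul₀
    (measurable_gaussianPDFReal 0 1).real_toNNReal.aemeasurable f]
  congr 1
  ext x
  rw [NNReal.smul_def, smul_eq_mul, Real.coe_toNNReal _ (gaussianPDFReal_nonneg 0 1 x)]

-- shifted integrals
lemma aux_int_exp_shift {c : ℝ} (hc : 0 < c) (b : ℝ) :
    ∫ x : ℝ, Real.exp (-c * (x - b) ^ 2) = Real.sqrt (π / c) := by
  rw [integral_sub_right_eq_self (fun y : ℝ => Real.exp (-c * y ^ 2)) b, integral_gaussian]

lemma aux_integrable_exp_shift {c : ℝ} (hc : 0 < c) (b : ℝ) :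
    Integrable (fun x : ℝ => Real.exp (-c * (x - b) ^ 2)) :=
  (integrable_exp_neg_mul_sq hc).comp_sub_right b

lemma aux_integrable_shift_poly {c : ℝ} (hc : 0 < c) (b : ℝ) :
    Integrable (fun y : ℝ => (y + b) ^ 2 * Real.exp (-c * y ^ 2)) := by
  have : (fun y : ℝ => (y + b) ^ 2 * Real.exp (-c * y ^ 2))
      = fun y : ℝ => y ^ 2 * Real.exp (-c * y ^ 2)
        + 2 * b * (y * Real.exp (-c * y ^ 2)) + b ^ 2 * Real.exp (-c * y ^ 2) := by
    funext y; ring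
  rw [this]
  exact ((aux_integrable_sq_exp hc).add
    ((integrable_mul_exp_neg_mul_sq hc).const_mul (2 * b))).add
    ((integrable_exp_neg_mul_sq hc).const_mul (b ^ 2))

lemma aux_int_sq_exp_shift {c : ℝ} (hc : 0 < c) (b : ℝ) :
    ∫ x : ℝ, x ^ 2 * Real.exp (-c * (x - b) ^ 2)
      = (1 / (2 * c) + b ^ 2) * Real.sqrt (π / c) := by
  have h1 : (fun x : ℝ => x ^ 2 * Real.exp (-c * (x - b) ^ 2))
      = fun x : ℝ => (fun y : ℝ => (y + b) ^ 2 * Real.exp (-c * y ^ 2)) (x - b) := by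
    funext x; simp only; rw [sub_add_cancel]
  rw [h1, integral_sub_right_eq_self (fun y : ℝ => (y + b) ^ 2 * Real.exp (-c * y ^ 2)) b]
  have h2 : (fun y : ℝ => (y + b) ^ 2 * Real.exp (-c * y ^ 2))
      = fun y : ℝ => y ^ 2 * Real.exp (-c * y ^ 2)
        + 2 * b * (y * Real.exp (-c * y ^ 2)) + b ^ 2 * Real.exp (-c * y ^ 2) := by
    funext y; ring
  rw [h2]
  have i1 : Integrable (fun y : ℝ => y ^ 2 * Real.exp (-c * y ^ 2)
      + 2 * b * (y * Real.exp (-c * y ^ 2))) := by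
    exact (aux_integrable_sq_exp hc).add ((integrable_mul_exp_neg_mul_sq hc).const_mul (2 * b))
  have i2 : Integrable (fun y : ℝ => b ^ 2 * Real.exp (-c * y ^ 2)) :=
    (integrable_exp_neg_mul_sq hc).const_mul (b ^ 2)
  rw [integral_add i1 i2,
    integral_add (aux_integrable_sq_exp hc)
      ((integrable_mul_exp_neg_mul_sq hc).const_mul (2 * b)),
    integral_const_mul, integral_const_mul, aux_int_sq_exp hc, aux_int_x_exp, integral_gaussian]
  ring

lemma aux_integrable_sq_exp_shift {c : ℝ} (hc : 0 < c) (b : ℝ) :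
    Integrable (fun x : ℝ => x ^ 2 * Real.exp (-c * (x - b) ^ 2)) := by
  have h1 : (fun x : ℝ => x ^ 2 * Real.exp (-c * (x - b) ^ 2))
      = fun x : ℝ => (fun y : ℝ => (y + b) ^ 2 * Real.exp (-c * y ^ 2)) (x - b) := by
    funext x; simp only; rw [sub_add_cancel]
  rw [h1]
  exact (aux_integrable_shift_poly hc b).comp_sub_right b

end Aux

open Real Set in
open scoped ENNReal NNReal in
/-- Preliminary bound in the proof of Theorem 2:
`E[|Z| exp(λ(μ+σZ)²)] ≤ exp(λμ²/(1−2λσ²)) ((1−2λσ²)^{−1/2} + (1−2λσ²)^{−3/2}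
+ 4λ²σ²μ²(1−2λσ²)^{−5/2})` for `Z ∼ N(0,1)` and `2λσ² < 1`. -/
theorem gaussian_abs_exp_sq_moment_bound
    (m σ l : ℝ) (hσ : 0 < σ) (hl : 2 * l * σ ^ 2 < 1) :
    ∫ z, |z| * Real.exp (l * (m + σ * z) ^ 2) ∂(gaussianReal 0 1)
      ≤ Real.exp (l * m ^ 2 / (1 - 2 * l * σ ^ 2))
        * ((Real.sqrt (1 - 2 * l * σ ^ 2))⁻¹
          + ((Real.sqrt (1 - 2 * l * σ ^ 2)) ^ 3)⁻¹
          + 4 * l ^ 2 * σ ^ 2 * m ^ 2 * ((Real.sqrt (1 - 2 * l * σ ^ 2)) ^ 5)⁻¹) := by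
  set a : ℝ := 1 - 2 * l * σ ^ 2 with ha_def
  have ha : 0 < a := by simp only [ha_def]; linarith
  set b : ℝ := 2 * l * m * σ / a with hb_def
  set c : ℝ := a / 2 with hc_def
  have hc : 0 < c := by positivity
  set C : ℝ := Real.exp (l * m ^ 2 / a) * (Real.sqrt (2 * π))⁻¹ with hC_def
  have hC : 0 ≤ C := by positivity
  -- pointwise identity
  have key : ∀ x : ℝ, gaussianPDFReal 0 1 x * Real.exp (l * (m + σ * x) ^ 2)
      = C * Real.exp (-c * (x - b) ^ 2) := by
    intro x
    rw [gaussianPDFReal]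
    simp only [NNReal.coe_one, mul_one, sub_zero]
    rw [hC_def, mul_assoc, ← Real.exp_add]
    rw [show Real.exp (l * m ^ 2 / a) * (Real.sqrt (2 * π))⁻¹ * Real.exp (-c * (x - b) ^ 2)
        = (Real.sqrt (2 * π))⁻¹ * Real.exp (l * m ^ 2 / a + -c * (x - b) ^ 2) by
      rw [Real.exp_add]; ring]
    congr 1
    rw [hc_def, hb_def]
    congr 1
    field_simp
    rw [ha_def]
    ring
  -- main bound
  rw [aux_integral_gaussianReal]
  have habs : ∀ x : ℝ, |x| ≤ 1 + x ^ 2 := fun x => by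
    nlinarith [sq_abs x, abs_nonneg x, sq_nonneg (|x| - 1)]
  have hg : Integrable (fun x : ℝ =>
      C * (Real.exp (-c * (x - b) ^ 2) + x ^ 2 * Real.exp (-c * (x - b) ^ 2))) :=
    ((aux_integrable_exp_shift hc b).add (aux_integrable_sq_exp_shift hc b)).const_mul C
  have hle : ∫ x : ℝ, gaussianPDFReal 0 1 x * (|x| * Real.exp (l * (m + σ * x) ^ 2))
      ≤ ∫ x : ℝ, C * (Real.exp (-c * (x - b) ^ 2) + x ^ 2 * Real.exp (-c * (x - b) ^ 2)) := by
    refine integral_mono_of_nonneg (Filter.Eventually.of_forall fun x => ?_) hg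
      (Filter.Eventually.of_forall fun x => ?_)
    · have := gaussianPDFReal_nonneg 0 1 x
      positivity
    · have h1 : gaussianPDFReal 0 1 x * (|x| * Real.exp (l * (m + σ * x) ^ 2))
          = |x| * (C * Real.exp (-c * (x - b) ^ 2)) := by
        rw [← key x]; ring
      show gaussianPDFReal 0 1 x * (|x| * Real.exp (l * (m + σ * x) ^ 2))
          ≤ C * (Real.exp (-c * (x - b) ^ 2) + x ^ 2 * Real.exp (-c * (x - b) ^ 2))
      rw [h1]
      have h2 : 0 ≤ Real.exp (-c * (x - b) ^ 2) := (Real.exp_pos _).le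
      calc |x| * (C * Real.exp (-c * (x - b) ^ 2))
          ≤ (1 + x ^ 2) * (C * Real.exp (-c * (x - b) ^ 2)) := by
            apply mul_le_mul_of_nonneg_right (habs x) (by positivity)
        _ = C * (Real.exp (-c * (x - b) ^ 2) + x ^ 2 * Real.exp (-c * (x - b) ^ 2)) := by ring
  refine hle.trans_eq ?_
  rw [integral_const_mul, integral_add (aux_integrable_exp_shift hc b)
    (aux_integrable_sq_exp_shift hc b), aux_int_exp_shift hc b, aux_int_sq_exp_shift hc b]
  -- now pure computation
  set sa : ℝ := Real.sqrt a with hsa_def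
  have hsa : 0 < sa := Real.sqrt_pos.mpr ha
  have hsa2 : sa ^ 2 = a := Real.sq_sqrt ha.le
  have hsqc : Real.sqrt (π / c) = Real.sqrt (2 * π) / sa := by
    rw [show π / c = 2 * π / a by rw [hc_def]; field_simp, hsa_def,
      Real.sqrt_div (by positivity) a]
  have hspi : (0:ℝ) < Real.sqrt (2 * π) := Real.sqrt_pos.mpr (by positivity)
  rw [hsqc, hC_def]
  rw [show l * m ^ 2 / (1 - 2 * l * σ ^ 2) = l * m ^ 2 / a by rw [← ha_def]]
  rw [mul_assoc]
  congr 1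
  have hb2 : b = 2 * l * m * σ / sa ^ 2 := by rw [hb_def, hsa2]
  have hcc : c = sa ^ 2 / 2 := by rw [hc_def, hsa2]
  rw [hb2, hcc]
  field_simp
  ring
end

section
/- Let K ≥ 1 be an integer, C > 0, 0 ≤ λ < 1/4, and let h : ℝ → ℝ be (K+1)-times differentiable with |h^{(j)}(z)| ≤ C·exp(λz²) for all z ∈ ℝ and all j = 0,1,…,K+1. For 0 ≤ k ≤ K define J_k(u) := E_Z[ ( E_{Z'}[ h^{(k)}(u·Z + sqrt(1−u²)·Z') ] )² ], where Z and Z' are independent standard Gaussian N(0,1) random variables. Then for every k with 0 ≤ k ≤ K−1 and every u ∈ [0,1), the function J_k is differentiable at u with derivative J_k'(u) = 2u · J_{k+1}(u). -/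
open MeasureTheory ProbabilityTheory Real Filter Topology
open scoped NNReal ENNReal

noncomputable def gphi (x : ℝ) : ℝ := (Real.sqrt (2 * Real.pi))⁻¹ * Real.exp (-x ^ 2 / 2)

lemma gphi_nonneg (x : ℝ) : 0 ≤ gphi x :=
  mul_nonneg (inv_nonneg.2 (Real.sqrt_nonneg _)) (Real.exp_nonneg _)

lemma continuous_gphi : Continuous gphi := by
  unfold gphi; fun_prop

lemma gaussianPDFReal_eq (x : ℝ) : gaussianPDFReal 0 1 x = gphi x := by
  simp [gaussianPDFReal, gphi]

lemma gauss_density (g : ℝ → ℝ) :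
    ∫ x, g x ∂(gaussianReal 0 1) = ∫ x, gphi x * g x := by
  rw [gaussianReal_of_var_ne_zero 0 one_ne_zero,
    show (gaussianPDF 0 1) = fun x => ((Real.toNNReal (gaussianPDFReal 0 1 x) : ℝ≥0) : ℝ≥0∞)
      from rfl,
    integral_withDensity_eq_integral_smul ((measurable_gaussianPDFReal 0 1).real_toNNReal) g]
  refine integral_congr_ae (ae_of_all _ fun x => ?_)
  simp only [NNReal.smul_def, Real.coe_toNNReal _ (gaussianPDFReal_nonneg 0 1 x),
    gaussianPDFReal_eq, smul_eq_mul, Real.coe_toNNReal _ (gphi_nonneg x)]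

lemma gauss_integrable_iff (g : ℝ → ℝ) :
    Integrable g (gaussianReal 0 1) ↔ Integrable (fun x => gphi x * g x) volume := by
  rw [gaussianReal_of_var_ne_zero 0 one_ne_zero,
    show (gaussianPDF 0 1) = fun x => ((Real.toNNReal (gaussianPDFReal 0 1 x) : ℝ≥0) : ℝ≥0∞)
      from rfl,
    integrable_withDensity_iff_integrable_smul ((measurable_gaussianPDFReal 0 1).real_toNNReal)]
  constructor <;> intro hi <;> refine hi.congr (ae_of_all _ fun x => ?_) <;>
    simp only [NNReal.smul_def, Real.coe_toNNReal _ (gaussianPDFReal_nonneg 0 1 x),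
      gaussianPDFReal_eq, smul_eq_mul, Real.coe_toNNReal _ (gphi_nonneg x)]

lemma abs_le_exp_quarter {b : ℝ} (x : ℝ) (hb : 0 < b) :
    |x| ≤ Real.sqrt (2 / b) * Real.exp (b / 4 * x ^ 2) := by
  have h1 : b / 2 * x ^ 2 ≤ Real.exp (b / 2 * x ^ 2) :=
    (le_add_of_nonneg_right zero_le_one).trans (Real.add_one_le_exp _)
  have h2 : x ^ 2 ≤ 2 / b * Real.exp (b / 2 * x ^ 2) := by
    have := mul_le_mul_of_nonneg_left h1 (le_of_lt (show (0:ℝ) < 2 / b by positivity))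
    calc x ^ 2 = 2 / b * (b / 2 * x ^ 2) := by field_simp
      _ ≤ 2 / b * Real.exp (b / 2 * x ^ 2) := this
  have h3 : Real.exp (b / 2 * x ^ 2) = Real.exp (b / 4 * x ^ 2) ^ 2 := by
    rw [show b / 2 * x ^ 2 = b / 4 * x ^ 2 + b / 4 * x ^ 2 from by ring, Real.exp_add]; ring
  calc |x| = Real.sqrt (x ^ 2) := (Real.sqrt_sq_eq_abs x).symm
    _ ≤ Real.sqrt (2 / b * Real.exp (b / 4 * x ^ 2) ^ 2) :=
        Real.sqrt_le_sqrt (by rw [← h3]; exact h2)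
    _ = Real.sqrt (2 / b) * Real.exp (b / 4 * x ^ 2) := by
        rw [Real.sqrt_mul (by positivity), Real.sqrt_sq (Real.exp_nonneg _)]

lemma integrable_one_add_abs_exp {b : ℝ} (hb : 0 < b) :
    Integrable (fun x : ℝ => (1 + |x|) * Real.exp (-b * x ^ 2)) volume := by
  have hint := (integrable_exp_neg_mul_sq (show (0:ℝ) < b / 2 by linarith)).const_mul
      (1 + Real.sqrt (2 / b))
  refine hint.mono' (Continuous.aestronglyMeasurable (by continuity)) (ae_of_all _ fun x => ?_)
  have h1 := abs_le_exp_quarter x hb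
  have e1 : Real.exp (-b * x ^ 2) ≤ Real.exp (-(b / 2) * x ^ 2) :=
    Real.exp_le_exp.2 (by nlinarith [sq_nonneg x])
  have e2 : Real.exp (b / 4 * x ^ 2) * Real.exp (-b * x ^ 2) ≤ Real.exp (-(b / 2) * x ^ 2) := by
    rw [← Real.exp_add]; exact Real.exp_le_exp.2 (by nlinarith [sq_nonneg x])
  have hx : ‖(1 + |x|) * Real.exp (-b * x ^ 2)‖ = (1 + |x|) * Real.exp (-b * x ^ 2) := by
    rw [Real.norm_eq_abs, abs_of_nonneg (by positivity)]
  rw [hx]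
  have h2 := mul_le_mul_of_nonneg_right h1 (Real.exp_nonneg (-b * x ^ 2))
  have h3 := mul_le_mul_of_nonneg_left e2 (Real.sqrt_nonneg (2 / b))
  nlinarith [Real.exp_nonneg (-b * x ^ 2), Real.sqrt_nonneg (2 / b)]

lemma integrable_gauss_of_le {g : ℝ → ℝ} (hm : AEStronglyMeasurable g volume)
    {B c : ℝ} (hc : c < 1 / 2)
    (hg : ∀ x, |g x| ≤ B * ((1 + |x|) * Real.exp (c * x ^ 2))) :
    Integrable g (gaussianReal 0 1) := by
  have hB : 0 ≤ B := by have := (abs_nonneg (g 0)).trans (hg 0); simpa using this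
  rw [gauss_integrable_iff]
  have hint := (integrable_one_add_abs_exp (show (0:ℝ) < 1 / 2 - c by linarith)).const_mul
      ((Real.sqrt (2 * Real.pi))⁻¹ * B)
  refine hint.mono' (continuous_gphi.aestronglyMeasurable.mul hm) (ae_of_all _ fun x => ?_)
  have key : Real.exp (-x ^ 2 / 2) * Real.exp (c * x ^ 2) = Real.exp (-(1 / 2 - c) * x ^ 2) := by
    rw [← Real.exp_add]; ring_nf
  have h1 : ‖gphi x * g x‖ ≤ gphi x * (B * ((1 + |x|) * Real.exp (c * x ^ 2))) := by
    rw [Real.norm_eq_abs, abs_mul, abs_of_nonneg (gphi_nonneg x)]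
    exact mul_le_mul_of_nonneg_left (hg x) (gphi_nonneg x)
  refine h1.trans (le_of_eq ?_)
  rw [← key]; unfold gphi; ring
lemma stein_gauss {g g' : ℝ → ℝ} (hd : ∀ x, HasDerivAt g (g' x) x)
    {B c : ℝ} (hc : c < 1 / 2)
    (hg : ∀ x, |g x| ≤ B * Real.exp (c * x ^ 2))
    (hg' : ∀ x, |g' x| ≤ B * Real.exp (c * x ^ 2)) :
    ∫ x, x * g x ∂(gaussianReal 0 1) = ∫ x, g' x ∂(gaussianReal 0 1) := by
  have hB : 0 ≤ B := by have := (abs_nonneg (g 0)).trans (hg 0); simpa using this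
  have hb : (0:ℝ) < 1 / 2 - c := by linarith
  have hgc : Continuous g := by
    rw [continuous_iff_continuousAt]; exact fun x => (hd x).continuousAt
  have hg'm : Measurable g' := by
    have heq : g' = deriv g := funext fun x => ((hd x).deriv).symm
    rw [heq]; exact measurable_deriv g
  -- bound : gphi x * exp (c x²) = (√2π)⁻¹ exp(-(1/2-c)x²)
  have hbd : ∀ x : ℝ, gphi x * Real.exp (c * x ^ 2)
      = (Real.sqrt (2 * Real.pi))⁻¹ * Real.exp (-(1 / 2 - c) * x ^ 2) := by
    intro x
    unfold gphi
    rw [mul_assoc, ← Real.exp_add]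
    ring_nf
  -- derivative of gphi
  have hphi : ∀ x : ℝ, HasDerivAt gphi (-x * gphi x) x := by
    intro x
    have h1 : HasDerivAt (fun x : ℝ => -x ^ 2 / 2) (-x) x := by
      have := ((hasDerivAt_pow 2 x).neg).div_const 2
      exact this.congr_deriv (by simp; ring)
    have h2 := (h1.exp).const_mul (Real.sqrt (2 * Real.pi))⁻¹
    exact h2.congr_deriv (by unfold gphi; ring)
  have hG : ∀ x : ℝ, HasDerivAt (fun x => g x * gphi x)
      (g' x * gphi x - x * (g x * gphi x)) x := by
    intro x
    have := (hd x).mul (hphi x)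
    exact this.congr_deriv (by ring)
  -- integrabilities over volume
  have hcommon : ∀ (f : ℝ → ℝ), (∀ x, |f x| ≤ B * Real.exp (c * x ^ 2)) →
      ∀ x : ℝ, |f x| * gphi x ≤ (Real.sqrt (2 * Real.pi))⁻¹ * B *
        ((1 + |x|) * Real.exp (-(1 / 2 - c) * x ^ 2)) := by
    intro f hf x
    have h1 : |f x| * gphi x ≤ (B * Real.exp (c * x ^ 2)) * gphi x :=
      mul_le_mul_of_nonneg_right (hf x) (gphi_nonneg x)
    have h2 : (B * Real.exp (c * x ^ 2)) * gphi x
        = B * ((Real.sqrt (2 * Real.pi))⁻¹ * Real.exp (-(1 / 2 - c) * x ^ 2)) := by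
      rw [← hbd x]; ring
    have h3 : (1:ℝ) ≤ 1 + |x| := le_add_of_nonneg_right (abs_nonneg x)
    calc |f x| * gphi x ≤ B * ((Real.sqrt (2 * Real.pi))⁻¹ * Real.exp (-(1 / 2 - c) * x ^ 2)) :=
          h1.trans_eq h2
      _ = (Real.sqrt (2 * Real.pi))⁻¹ * B * (1 * Real.exp (-(1 / 2 - c) * x ^ 2)) := by ring
      _ ≤ (Real.sqrt (2 * Real.pi))⁻¹ * B * ((1 + |x|) * Real.exp (-(1 / 2 - c) * x ^ 2)) := by
          refine mul_le_mul_of_nonneg_left ?_ (by positivity)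
          exact mul_le_mul_of_nonneg_right h3 (Real.exp_nonneg _)
  have Ig' : Integrable (fun x => g' x * gphi x) volume := by
    refine ((integrable_one_add_abs_exp hb).const_mul ((Real.sqrt (2 * Real.pi))⁻¹ * B)).mono'
      (hg'm.aestronglyMeasurable.mul continuous_gphi.aestronglyMeasurable)
      (ae_of_all _ fun x => ?_)
    rw [Real.norm_eq_abs, abs_mul, abs_of_nonneg (gphi_nonneg x)]
    exact hcommon g' hg' x
  have Ixg : Integrable (fun x => x * (g x * gphi x)) volume := by
    refine ((integrable_one_add_abs_exp hb).const_mul ((Real.sqrt (2 * Real.pi))⁻¹ * B)).mono'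
      ((continuous_id.mul (hgc.mul continuous_gphi)).aestronglyMeasurable)
      (ae_of_all _ fun x => ?_)
    rw [Real.norm_eq_abs, abs_mul, abs_mul, abs_of_nonneg (gphi_nonneg x)]
    have h1 := hcommon g hg x
    have h2 : 0 ≤ (Real.sqrt (2 * Real.pi))⁻¹ * B * Real.exp (-(1 / 2 - c) * x ^ 2) := by positivity
    have h3 : |g x| * gphi x ≤ (Real.sqrt (2 * Real.pi))⁻¹ * B *
        ((1 + |x|) * Real.exp (-(1 / 2 - c) * x ^ 2)) := h1
    have h5 : 0 ≤ |g x| * gphi x := mul_nonneg (abs_nonneg _) (gphi_nonneg x)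
    -- |x| * (|g|φ) ≤ (√2π)⁻¹ B (1+|x|) e^{-(1/2-c)x²} -- since |x|(1+|x|) ≥ ... need direct:
    -- |g x| φ ≤ (√2π)⁻¹ B (1+|x|) e ; but we need |x| |g| φ ≤ (√2π)⁻¹ B (1+|x|) e.
    -- use stronger: |g x| φ ≤ (√2π)⁻¹ B e (take the (1+|x|)-free bound)
    have h6 : |g x| * gphi x ≤ (Real.sqrt (2 * Real.pi))⁻¹ * B *
        Real.exp (-(1 / 2 - c) * x ^ 2) := by
      have := mul_le_mul_of_nonneg_right (hg x) (gphi_nonneg x)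
      calc |g x| * gphi x ≤ B * Real.exp (c * x ^ 2) * gphi x := this
        _ = B * (gphi x * Real.exp (c * x ^ 2)) := by ring
        _ = (Real.sqrt (2 * Real.pi))⁻¹ * B * Real.exp (-(1 / 2 - c) * x ^ 2) := by
            rw [hbd x]; ring
    have h7 := mul_le_mul_of_nonneg_left h6 (abs_nonneg x)
    have h8 : 0 ≤ Real.exp (-(1 / 2 - c) * x ^ 2) := Real.exp_nonneg _
    nlinarith [h2]
  -- limits at ±∞
  have htendaux : ∀ lf : Filter ℝ, Tendsto (fun x : ℝ => x ^ 2) lf atTop →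
      Tendsto (fun x => g x * gphi x) lf (𝓝 0) := by
    intro lf hlf
    have h1 : Tendsto (fun x : ℝ => (1 / 2 - c) * x ^ 2) lf atTop :=
      hlf.const_mul_atTop hb
    have h2 : Tendsto (fun x : ℝ => -(1 / 2 - c) * x ^ 2) lf atBot :=
      (tendsto_neg_atTop_atBot.comp h1).congr fun x => by simp only [Function.comp_apply]; ring
    have h3 : Tendsto (fun x : ℝ => Real.exp (-(1 / 2 - c) * x ^ 2)) lf (𝓝 0) :=
      Real.tendsto_exp_atBot.comp h2
    have h4 : Tendsto (fun x : ℝ =>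
        (Real.sqrt (2 * Real.pi))⁻¹ * B * Real.exp (-(1 / 2 - c) * x ^ 2)) lf (𝓝 0) := by
      have := h3.const_mul ((Real.sqrt (2 * Real.pi))⁻¹ * B)
      simpa using this
    refine squeeze_zero_norm (fun x => ?_) h4
    rw [Real.norm_eq_abs, abs_mul, abs_of_nonneg (gphi_nonneg x)]
    have h6 : |g x| * gphi x ≤ (Real.sqrt (2 * Real.pi))⁻¹ * B *
        Real.exp (-(1 / 2 - c) * x ^ 2) := by
      have h0 := mul_le_mul_of_nonneg_right (hg x) (gphi_nonneg x)
      calc |g x| * gphi x ≤ B * Real.exp (c * x ^ 2) * gphi x := h0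
        _ = B * (gphi x * Real.exp (c * x ^ 2)) := by ring
        _ = (Real.sqrt (2 * Real.pi))⁻¹ * B * Real.exp (-(1 / 2 - c) * x ^ 2) := by
            rw [hbd x]; ring
    exact h6
  have htop : Tendsto (fun x => g x * gphi x) atTop (𝓝 0) :=
    htendaux atTop (tendsto_pow_atTop two_ne_zero)
  have hbot : Tendsto (fun x => g x * gphi x) atBot (𝓝 0) := by
    refine htendaux atBot ?_
    have : Tendsto (fun x : ℝ => |x| ^ 2) atBot atTop :=
      (tendsto_pow_atTop two_ne_zero).comp tendsto_abs_atBot_atTop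
    exact this.congr fun x => sq_abs x
  have hzero : ∫ x, (g' x * gphi x - x * (g x * gphi x)) = 0 := by
    simpa using MeasureTheory.integral_of_hasDerivAt_of_tendsto hG (Ig'.sub Ixg) hbot htop
  rw [integral_sub Ig' Ixg, sub_eq_zero] at hzero
  rw [gauss_density, gauss_density]
  calc ∫ x, gphi x * (x * g x) = ∫ x, x * (g x * gphi x) :=
        integral_congr_ae (ae_of_all _ fun x => by ring)
    _ = ∫ x, g' x * gphi x := hzero.symm
    _ = ∫ x, gphi x * g' x := integral_congr_ae (ae_of_all _ fun x => by ring)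
noncomputable def Fz (h : ℝ → ℝ) (j : ℕ) (u z : ℝ) : ℝ :=
  ∫ z', iteratedDeriv j h (u * z + Real.sqrt (1 - u ^ 2) * z') ∂(gaussianReal 0 1)

noncomputable def Mconst (l : ℝ) : ℝ := ∫ z', Real.exp (l * z' ^ 2) ∂(gaussianReal 0 1)

section Main

variable {K : ℕ} {C l : ℝ} {h : ℝ → ℝ}

lemma cs_bound {u : ℝ} (z z' : ℝ) (hu : |u| ≤ 1) :
    (u * z + Real.sqrt (1 - u ^ 2) * z') ^ 2 ≤ z ^ 2 + z' ^ 2 := by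
  have h0 := abs_le.1 hu
  have h1 : u ^ 2 ≤ 1 := by nlinarith [h0.1, h0.2]
  have h2 : Real.sqrt (1 - u ^ 2) ^ 2 = 1 - u ^ 2 := Real.sq_sqrt (by linarith)
  nlinarith [sq_nonneg (u * z' - Real.sqrt (1 - u ^ 2) * z)]

lemma C_nonneg (hbdd : ∀ j ≤ K + 1, ∀ z, |iteratedDeriv j h z| ≤ C * Real.exp (l * z ^ 2)) :
    0 ≤ C := by
  have := (abs_nonneg (iteratedDeriv 0 h 0)).trans (hbdd 0 (by omega) 0)
  simpa using this

lemma hk_deriv (hdiff : ∀ j < K + 1, Differentiable ℝ (iteratedDeriv j h)) :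
    ∀ j < K + 1, ∀ y : ℝ, HasDerivAt (iteratedDeriv j h) (iteratedDeriv (j + 1) h y) y := by
  intro j hj y
  have h1 := ((hdiff j hj) y).hasDerivAt
  rwa [show deriv (iteratedDeriv j h) y = iteratedDeriv (j + 1) h y from by
    rw [iteratedDeriv_succ]] at h1

lemma hk_meas (hdiff : ∀ j < K + 1, Differentiable ℝ (iteratedDeriv j h)) :
    ∀ j ≤ K + 1, Measurable (iteratedDeriv j h) := by
  intro j hj
  rcases eq_or_lt_of_le hj with rfl | hj'
  · rw [iteratedDeriv_succ]
    exact measurable_deriv _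
  · exact ((hdiff j hj').continuous).measurable

lemma hk_bound (hl0 : 0 ≤ l)
    (hbdd : ∀ j ≤ K + 1, ∀ z, |iteratedDeriv j h z| ≤ C * Real.exp (l * z ^ 2)) :
    ∀ j ≤ K + 1, ∀ u z z' : ℝ, |u| ≤ 1 →
      |iteratedDeriv j h (u * z + Real.sqrt (1 - u ^ 2) * z')| ≤
        C * (Real.exp (l * z ^ 2) * Real.exp (l * z' ^ 2)) := by
  intro j hj u z z' hu
  refine (hbdd j hj _).trans ?_
  rw [← Real.exp_add]
  have hC := C_nonneg hbdd
  have h1 := cs_bound (u := u) z z' hu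
  have hle : l * (u * z + Real.sqrt (1 - u ^ 2) * z') ^ 2 ≤ l * z ^ 2 + l * z' ^ 2 := by nlinarith
  exact mul_le_mul_of_nonneg_left (Real.exp_le_exp.2 hle) hC

lemma inner_integrable (hl0 : 0 ≤ l) (hl : l < 1 / 4)
    (hdiff : ∀ j < K + 1, Differentiable ℝ (iteratedDeriv j h))
    (hbdd : ∀ j ≤ K + 1, ∀ z, |iteratedDeriv j h z| ≤ C * Real.exp (l * z ^ 2)) :
    ∀ j ≤ K + 1, ∀ u z : ℝ, |u| ≤ 1 →
      Integrable (fun z' => iteratedDeriv j h (u * z + Real.sqrt (1 - u ^ 2) * z'))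
        (gaussianReal 0 1) := by
  intro j hj u z hu
  have hC := C_nonneg hbdd
  refine integrable_gauss_of_le (((hk_meas hdiff j hj).comp (by fun_prop)).aestronglyMeasurable)
    (show l < 1 / 2 by linarith) (B := C * Real.exp (l * z ^ 2)) (fun z' => ?_)
  have h1 := hk_bound hl0 hbdd j hj u z z' hu
  have h2 : (1:ℝ) ≤ 1 + |z'| := le_add_of_nonneg_right (abs_nonneg _)
  calc |iteratedDeriv j h (u * z + Real.sqrt (1 - u ^ 2) * z')|
      ≤ C * (Real.exp (l * z ^ 2) * Real.exp (l * z' ^ 2)) := h1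
    _ = C * Real.exp (l * z ^ 2) * (1 * Real.exp (l * z' ^ 2)) := by ring
    _ ≤ C * Real.exp (l * z ^ 2) * ((1 + |z'|) * Real.exp (l * z' ^ 2)) := by
        refine mul_le_mul_of_nonneg_left ?_ (by positivity)
        exact mul_le_mul_of_nonneg_right h2 (Real.exp_nonneg _)

lemma Mconst_integrable (hl0 : 0 ≤ l) (hl : l < 1 / 4) :
    Integrable (fun z' : ℝ => Real.exp (l * z' ^ 2)) (gaussianReal 0 1) := by
  refine integrable_gauss_of_le
    (Real.continuous_exp.comp (continuous_const.mul (continuous_pow 2))).aestronglyMeasurable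
    (show l < 1 / 2 by linarith) (B := 1)
    (fun x => ?_)
  have h2 : (1:ℝ) ≤ 1 + |x| := le_add_of_nonneg_right (abs_nonneg _)
  rw [abs_of_nonneg (Real.exp_nonneg _)]
  nlinarith [Real.exp_nonneg (l * x ^ 2), Real.exp_pos (l * x ^ 2)]

lemma Mconst_nonneg : 0 ≤ Mconst l := integral_nonneg fun _ => Real.exp_nonneg _

lemma Fz_bound (hl0 : 0 ≤ l) (hl : l < 1 / 4)
    (hdiff : ∀ j < K + 1, Differentiable ℝ (iteratedDeriv j h))
    (hbdd : ∀ j ≤ K + 1, ∀ z, |iteratedDeriv j h z| ≤ C * Real.exp (l * z ^ 2)) :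
    ∀ j ≤ K + 1, ∀ u z : ℝ, |u| ≤ 1 →
      |Fz h j u z| ≤ C * Mconst l * Real.exp (l * z ^ 2) := by
  intro j hj u z hu
  have hInt := inner_integrable hl0 hl hdiff hbdd j hj u z hu
  calc |Fz h j u z|
      ≤ ∫ z', |iteratedDeriv j h (u * z + Real.sqrt (1 - u ^ 2) * z')| ∂(gaussianReal 0 1) := by
        simpa [Real.norm_eq_abs, Fz] using
          norm_integral_le_integral_norm
            (fun z' => iteratedDeriv j h (u * z + Real.sqrt (1 - u ^ 2) * z'))
            (μ := gaussianReal 0 1)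
    _ ≤ ∫ z', C * Real.exp (l * z ^ 2) * Real.exp (l * z' ^ 2) ∂(gaussianReal 0 1) := by
        refine integral_mono hInt.abs ((Mconst_integrable hl0 hl).const_mul _) fun z' => ?_
        have h1 := hk_bound hl0 hbdd j hj u z z' hu
        calc |iteratedDeriv j h (u * z + Real.sqrt (1 - u ^ 2) * z')|
            ≤ C * (Real.exp (l * z ^ 2) * Real.exp (l * z' ^ 2)) := h1
          _ = C * Real.exp (l * z ^ 2) * Real.exp (l * z' ^ 2) := by ring
    _ = C * Mconst l * Real.exp (l * z ^ 2) := by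
        rw [MeasureTheory.integral_const_mul]
        unfold Mconst; ring

lemma Fz_meas (hdiff : ∀ j < K + 1, Differentiable ℝ (iteratedDeriv j h)) :
    ∀ j ≤ K + 1, ∀ u : ℝ, StronglyMeasurable (Fz h j u) := by
  intro j hj u
  exact MeasureTheory.StronglyMeasurable.integral_prod_right'
    (f := fun p : ℝ × ℝ => iteratedDeriv j h (u * p.1 + Real.sqrt (1 - u ^ 2) * p.2))
    (((hk_meas hdiff j hj).comp (by fun_prop)).stronglyMeasurable)

lemma Fz_hasDerivAt_z (hl0 : 0 ≤ l) (hl : l < 1 / 4)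
    (hdiff : ∀ j < K + 1, Differentiable ℝ (iteratedDeriv j h))
    (hbdd : ∀ j ≤ K + 1, ∀ z, |iteratedDeriv j h z| ≤ C * Real.exp (l * z ^ 2)) :
    ∀ j < K + 1, ∀ u z₀ : ℝ, |u| ≤ 1 →
      HasDerivAt (fun z => Fz h j u z) (u * Fz h (j + 1) u z₀) z₀ := by
  intro j hj u z₀ hu
  have hC := C_nonneg hbdd
  have hbound : ∀ᵐ z' ∂(gaussianReal 0 1), ∀ z ∈ Metric.ball z₀ 1,
      ‖u * iteratedDeriv (j + 1) h (u * z + Real.sqrt (1 - u ^ 2) * z')‖ ≤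
        |u| * (C * Real.exp (l * (|z₀| + 1) ^ 2) * Real.exp (l * z' ^ 2)) := by
    refine ae_of_all _ fun z' z hz => ?_
    rw [Real.norm_eq_abs, abs_mul]
    have hb := hk_bound hl0 hbdd (j + 1) (by omega) u z z' hu
    have hz1 : |z| ≤ |z₀| + 1 := by
      have hd := Metric.mem_ball.1 hz
      rw [Real.dist_eq] at hd
      have := abs_sub_abs_le_abs_sub z z₀
      linarith
    have hz2 : Real.exp (l * z ^ 2) ≤ Real.exp (l * (|z₀| + 1) ^ 2) := by
      apply Real.exp_le_exp.2
      have : z ^ 2 ≤ (|z₀| + 1) ^ 2 := by nlinarith [sq_abs z, abs_nonneg z]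
      nlinarith
    refine mul_le_mul_of_nonneg_left ?_ (abs_nonneg u)
    calc |iteratedDeriv (j + 1) h (u * z + Real.sqrt (1 - u ^ 2) * z')|
        ≤ C * (Real.exp (l * z ^ 2) * Real.exp (l * z' ^ 2)) := hb
      _ ≤ C * (Real.exp (l * (|z₀| + 1) ^ 2) * Real.exp (l * z' ^ 2)) := by
          refine mul_le_mul_of_nonneg_left ?_ hC
          exact mul_le_mul_of_nonneg_right hz2 (Real.exp_nonneg _)
      _ = C * Real.exp (l * (|z₀| + 1) ^ 2) * Real.exp (l * z' ^ 2) := by ring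
  have hboundint : Integrable
      (fun z' => |u| * (C * Real.exp (l * (|z₀| + 1) ^ 2) * Real.exp (l * z' ^ 2)))
      (gaussianReal 0 1) :=
    ((Mconst_integrable hl0 hl).const_mul (C * Real.exp (l * (|z₀| + 1) ^ 2))).const_mul |u|
  have hdiffa : ∀ᵐ z' ∂(gaussianReal 0 1), ∀ z ∈ Metric.ball z₀ 1,
      HasDerivAt (fun z => iteratedDeriv j h (u * z + Real.sqrt (1 - u ^ 2) * z'))
        (u * iteratedDeriv (j + 1) h (u * z + Real.sqrt (1 - u ^ 2) * z')) z := by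
    refine ae_of_all _ fun z' z hz => ?_
    have hinner : HasDerivAt (fun z => u * z + Real.sqrt (1 - u ^ 2) * z') u z := by
      simpa using ((hasDerivAt_id z).const_mul u).add_const (Real.sqrt (1 - u ^ 2) * z')
    have houter := hk_deriv hdiff j hj (u * z + Real.sqrt (1 - u ^ 2) * z')
    have hcomp := houter.comp z hinner
    exact hcomp.congr_deriv (mul_comm _ _)
  have key := hasDerivAt_integral_of_dominated_loc_of_deriv_le (μ := gaussianReal 0 1)
    (F := fun z z' => iteratedDeriv j h (u * z + Real.sqrt (1 - u ^ 2) * z'))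
    (F' := fun z z' => u * iteratedDeriv (j + 1) h (u * z + Real.sqrt (1 - u ^ 2) * z'))
    (x₀ := z₀)
    (bound := fun z' => |u| * (C * Real.exp (l * (|z₀| + 1) ^ 2) * Real.exp (l * z' ^ 2)))
    (Metric.ball_mem_nhds z₀ one_pos)
    (Eventually.of_forall fun z =>
      (((hk_meas hdiff j (le_of_lt hj)).comp (by fun_prop)).aestronglyMeasurable))
    (inner_integrable hl0 hl hdiff hbdd j (le_of_lt hj) u z₀ hu)
    ((((hk_meas hdiff (j + 1) (by omega)).comp (by fun_prop)).const_mul u).aestronglyMeasurable)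
    hbound hboundint hdiffa
  have h2 := key.2
  rw [MeasureTheory.integral_const_mul] at h2
  exact h2

set_option maxHeartbeats 1000000 in
lemma Fz_hasDerivAt_u (hl0 : 0 ≤ l) (hl : l < 1 / 4)
    (hdiff : ∀ j < K + 1, Differentiable ℝ (iteratedDeriv j h))
    (hbdd : ∀ j ≤ K + 1, ∀ z, |iteratedDeriv j h z| ≤ C * Real.exp (l * z ^ 2)) :
    ∀ k : ℕ, k + 2 ≤ K + 1 → ∀ z u₁ : ℝ, |u₁| < 1 →
      HasDerivAt (fun u => Fz h k u z)
        (z * Fz h (k + 1) u₁ z - u₁ * Fz h (k + 2) u₁ z) u₁ := by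
  intro k hk z u₁ hu₁
  have hC := C_nonneg hbdd
  set a : ℝ := (1 + |u₁|) / 2 with ha
  have ha1 : a < 1 := by rw [ha]; linarith
  have ha0 : |u₁| < a := by rw [ha]; linarith [abs_nonneg u₁]
  have haa : 0 < a := lt_of_le_of_lt (abs_nonneg u₁) ha0
  have hε : (0:ℝ) < a - |u₁| := by linarith
  have hsa0 : (0:ℝ) < Real.sqrt (1 - a ^ 2) := Real.sqrt_pos.2 (by nlinarith)
  set sa : ℝ := Real.sqrt (1 - a ^ 2) with hsa
  have hmem : ∀ u ∈ Metric.ball u₁ (a - |u₁|), |u| ≤ a := by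
    intro u hu
    have hd := Metric.mem_ball.1 hu
    rw [Real.dist_eq] at hd
    have := abs_sub_abs_le_abs_sub u u₁
    linarith
  have hsu : ∀ u : ℝ, |u| ≤ a → sa ≤ Real.sqrt (1 - u ^ 2) := by
    intro u hu
    refine Real.sqrt_le_sqrt ?_
    have : u ^ 2 ≤ a ^ 2 := by nlinarith [sq_abs u, abs_nonneg u]
    linarith
  -- dominated differentiation in u
  have hbound : ∀ᵐ z' ∂(gaussianReal 0 1), ∀ u ∈ Metric.ball u₁ (a - |u₁|),
      ‖(z - u / Real.sqrt (1 - u ^ 2) * z') *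
          iteratedDeriv (k + 1) h (u * z + Real.sqrt (1 - u ^ 2) * z')‖ ≤
        (|z| + a / sa * |z'|) * (C * Real.exp (l * z ^ 2) * Real.exp (l * z' ^ 2)) := by
    refine ae_of_all _ fun z' u hu => ?_
    have hua := hmem u hu
    have hsua := hsu u hua
    have hb := hk_bound hl0 hbdd (k + 1) (by omega) u z z' (hua.trans (le_of_lt ha1))
    rw [Real.norm_eq_abs, abs_mul]
    have h1 : |z - u / Real.sqrt (1 - u ^ 2) * z'| ≤ |z| + a / sa * |z'| := by
      have h2 : |u / Real.sqrt (1 - u ^ 2)| ≤ a / sa := by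
        rw [abs_div, abs_of_nonneg (Real.sqrt_nonneg _)]
        exact div_le_div₀ (le_of_lt haa) hua hsa0 hsua
      calc |z - u / Real.sqrt (1 - u ^ 2) * z'|
          ≤ |z| + |u / Real.sqrt (1 - u ^ 2) * z'| := abs_sub _ _
        _ = |z| + |u / Real.sqrt (1 - u ^ 2)| * |z'| := by rw [abs_mul]
        _ ≤ |z| + a / sa * |z'| := by
            have := mul_le_mul_of_nonneg_right h2 (abs_nonneg z')
            linarith
    refine mul_le_mul h1 (by
      calc |iteratedDeriv (k + 1) h (u * z + Real.sqrt (1 - u ^ 2) * z')|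
          ≤ C * (Real.exp (l * z ^ 2) * Real.exp (l * z' ^ 2)) := hb
        _ = C * Real.exp (l * z ^ 2) * Real.exp (l * z' ^ 2) := by ring)
      (abs_nonneg _) (by positivity)
  have hboundint : Integrable
      (fun z' => (|z| + a / sa * |z'|) * (C * Real.exp (l * z ^ 2) * Real.exp (l * z' ^ 2)))
      (gaussianReal 0 1) := by
    refine integrable_gauss_of_le
      (Continuous.aestronglyMeasurable (by
        exact ((continuous_const.add (continuous_const.mul continuous_abs : Continuous fun x : ℝ => a / sa * |x|)).mul
          (continuous_const.mul
            (Real.continuous_exp.comp (continuous_const.mul (continuous_pow 2)))))))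
      (show l < 1 / 2 by linarith)
      (B := (|z| + a / sa) * (C * Real.exp (l * z ^ 2))) (fun x => ?_)
    have hkn : 0 ≤ a / sa := by positivity
    have he : (0:ℝ) ≤ Real.exp (l * x ^ 2) := Real.exp_nonneg _
    have he1 : (0:ℝ) ≤ C * Real.exp (l * z ^ 2) := by positivity
    have h3 : |z| + a / sa * |x| ≤ (|z| + a / sa) * (1 + |x|) := by
      nlinarith [abs_nonneg x, abs_nonneg z]
    rw [abs_of_nonneg (by positivity)]
    calc (|z| + a / sa * |x|) * (C * Real.exp (l * z ^ 2) * Real.exp (l * x ^ 2))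
        ≤ ((|z| + a / sa) * (1 + |x|)) * (C * Real.exp (l * z ^ 2) * Real.exp (l * x ^ 2)) := by
          refine mul_le_mul_of_nonneg_right h3 (by positivity)
      _ = (|z| + a / sa) * (C * Real.exp (l * z ^ 2)) * ((1 + |x|) * Real.exp (l * x ^ 2)) := by
          ring
  have hdiffa : ∀ᵐ z' ∂(gaussianReal 0 1), ∀ u ∈ Metric.ball u₁ (a - |u₁|),
      HasDerivAt (fun u => iteratedDeriv k h (u * z + Real.sqrt (1 - u ^ 2) * z'))
        ((z - u / Real.sqrt (1 - u ^ 2) * z') *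
          iteratedDeriv (k + 1) h (u * z + Real.sqrt (1 - u ^ 2) * z')) u := by
    refine ae_of_all _ fun z' u hu => ?_
    have hua := hmem u hu
    have h1u : (0:ℝ) < 1 - u ^ 2 := by nlinarith [sq_abs u, abs_nonneg u]
    have hs_ne : 1 - u ^ 2 ≠ 0 := ne_of_gt h1u
    have hsqrt_pos : 0 < Real.sqrt (1 - u ^ 2) := Real.sqrt_pos.2 h1u
    have hsq : HasDerivAt (fun u : ℝ => Real.sqrt (1 - u ^ 2))
        (1 / (2 * Real.sqrt (1 - u ^ 2)) * -(2 * u ^ 1)) u :=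
      (Real.hasDerivAt_sqrt hs_ne).comp u ((hasDerivAt_pow 2 u).const_sub 1)
    have hlin : HasDerivAt (fun u => u * z + Real.sqrt (1 - u ^ 2) * z')
        (z + (1 / (2 * Real.sqrt (1 - u ^ 2)) * -(2 * u ^ 1)) * z') u :=
      (hasDerivAt_mul_const z).add (hsq.mul_const z')
    have hcomp := (hk_deriv hdiff k (by omega) (u * z + Real.sqrt (1 - u ^ 2) * z')).comp u hlin
    refine hcomp.congr_deriv ?_
    have : Real.sqrt (1 - u ^ 2) ≠ 0 := ne_of_gt hsqrt_pos
    field_simp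
    ring
  have hF'meas : AEStronglyMeasurable
      (fun z' => (z - u₁ / Real.sqrt (1 - u₁ ^ 2) * z') *
        iteratedDeriv (k + 1) h (u₁ * z + Real.sqrt (1 - u₁ ^ 2) * z')) (gaussianReal 0 1) := by
    apply Measurable.aestronglyMeasurable
    refine Measurable.mul ?_ ((hk_meas hdiff (k + 1) (by omega)).comp (by fun_prop))
    exact measurable_const.sub (measurable_id.const_mul _)
  have key := hasDerivAt_integral_of_dominated_loc_of_deriv_le (μ := gaussianReal 0 1)
    (F := fun u z' => iteratedDeriv k h (u * z + Real.sqrt (1 - u ^ 2) * z'))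
    (F' := fun u z' => (z - u / Real.sqrt (1 - u ^ 2) * z') *
      iteratedDeriv (k + 1) h (u * z + Real.sqrt (1 - u ^ 2) * z'))
    (x₀ := u₁)
    (bound := fun z' => (|z| + a / sa * |z'|) * (C * Real.exp (l * z ^ 2) * Real.exp (l * z' ^ 2)))
    (Metric.ball_mem_nhds u₁ hε)
    (Eventually.of_forall fun u =>
      (((hk_meas hdiff k (by omega)).comp (by fun_prop)).aestronglyMeasurable))
    (inner_integrable hl0 hl hdiff hbdd k (by omega) u₁ z (le_of_lt hu₁))
    hF'meas hbound hboundint hdiffa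
  have hDer := key.2
  -- now rewrite the derivative value
  have hg1int := inner_integrable hl0 hl hdiff hbdd (k + 1) (by omega) u₁ z (le_of_lt hu₁)
  have hzg1int : Integrable
      (fun z' => z' * iteratedDeriv (k + 1) h (u₁ * z + Real.sqrt (1 - u₁ ^ 2) * z'))
      (gaussianReal 0 1) := by
    refine integrable_gauss_of_le
      ((measurable_id.mul ((hk_meas hdiff (k + 1) (by omega)).comp
        (by fun_prop))).aestronglyMeasurable)
      (show l < 1 / 2 by linarith) (B := C * Real.exp (l * z ^ 2)) (fun x => ?_)
    have hb := hk_bound hl0 hbdd (k + 1) (by omega) u₁ z x (le_of_lt hu₁)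
    rw [abs_mul]
    calc |x| * |iteratedDeriv (k + 1) h (u₁ * z + Real.sqrt (1 - u₁ ^ 2) * x)|
        ≤ |x| * (C * (Real.exp (l * z ^ 2) * Real.exp (l * x ^ 2))) :=
          mul_le_mul_of_nonneg_left hb (abs_nonneg x)
      _ = C * Real.exp (l * z ^ 2) * (|x| * Real.exp (l * x ^ 2)) := by ring
      _ ≤ C * Real.exp (l * z ^ 2) * ((1 + |x|) * Real.exp (l * x ^ 2)) := by
          refine mul_le_mul_of_nonneg_left ?_ (by positivity)
          refine mul_le_mul_of_nonneg_right ?_ (Real.exp_nonneg _)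
          linarith [abs_nonneg x]
  -- Stein in z'
  have hstein : ∫ z', z' * iteratedDeriv (k + 1) h (u₁ * z + Real.sqrt (1 - u₁ ^ 2) * z')
        ∂(gaussianReal 0 1)
      = Real.sqrt (1 - u₁ ^ 2) * Fz h (k + 2) u₁ z := by
    have h1u : (0:ℝ) < 1 - u₁ ^ 2 := by nlinarith [sq_abs u₁, abs_nonneg u₁]
    have hs1 : Real.sqrt (1 - u₁ ^ 2) ≤ 1 :=
      Real.sqrt_le_one.2 (by nlinarith [sq_nonneg u₁])
    have hsnn : 0 ≤ Real.sqrt (1 - u₁ ^ 2) := Real.sqrt_nonneg _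
    have hd : ∀ x : ℝ, HasDerivAt
        (fun x => iteratedDeriv (k + 1) h (u₁ * z + Real.sqrt (1 - u₁ ^ 2) * x))
        (Real.sqrt (1 - u₁ ^ 2) *
          iteratedDeriv (k + 2) h (u₁ * z + Real.sqrt (1 - u₁ ^ 2) * x)) x := by
      intro x
      have hinner : HasDerivAt (fun x => u₁ * z + Real.sqrt (1 - u₁ ^ 2) * x)
          (Real.sqrt (1 - u₁ ^ 2)) x := by
        simpa using (((hasDerivAt_id x).const_mul (Real.sqrt (1 - u₁ ^ 2))).const_add (u₁ * z))
      have := (hk_deriv hdiff (k + 1) (by omega) (u₁ * z + Real.sqrt (1 - u₁ ^ 2) * x)).comp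
        x hinner
      exact this.congr_deriv (mul_comm _ _)
    have hbnd : ∀ j : ℕ, j ≤ K + 1 → ∀ x : ℝ,
        |iteratedDeriv j h (u₁ * z + Real.sqrt (1 - u₁ ^ 2) * x)| ≤
          C * Real.exp (2 * l * (u₁ * z) ^ 2) * Real.exp (2 * l * x ^ 2) := by
      intro j hj x
      refine (hbdd j hj _).trans ?_
      rw [mul_assoc, ← Real.exp_add]
      refine mul_le_mul_of_nonneg_left (Real.exp_le_exp.2 ?_) hC
      have hs2 : Real.sqrt (1 - u₁ ^ 2) ^ 2 = 1 - u₁ ^ 2 := Real.sq_sqrt (by linarith)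
      have hA : (u₁ * z + Real.sqrt (1 - u₁ ^ 2) * x) ^ 2 ≤ 2 * (u₁ * z) ^ 2 + 2 * x ^ 2 := by
        nlinarith [sq_nonneg (u₁ * z - Real.sqrt (1 - u₁ ^ 2) * x), sq_nonneg x,
          sq_nonneg (Real.sqrt (1 - u₁ ^ 2) * x), sq_nonneg u₁]
      nlinarith
    have happ := stein_gauss (B := C * Real.exp (2 * l * (u₁ * z) ^ 2)) (c := 2 * l)
      hd (by linarith)
      (fun x => hbnd (k + 1) (by omega) x)
      (fun x => by
        rw [abs_mul, abs_of_nonneg hsnn]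
        have := hbnd (k + 2) (by omega) x
        nlinarith [abs_nonneg (iteratedDeriv (k + 2) h (u₁ * z + Real.sqrt (1 - u₁ ^ 2) * x))])
    rw [happ]
    rw [MeasureTheory.integral_const_mul]
    rfl
  -- put the value in the desired form
  have hval : ∫ z', (z - u₁ / Real.sqrt (1 - u₁ ^ 2) * z') *
        iteratedDeriv (k + 1) h (u₁ * z + Real.sqrt (1 - u₁ ^ 2) * z') ∂(gaussianReal 0 1)
      = z * Fz h (k + 1) u₁ z - u₁ * Fz h (k + 2) u₁ z := by
    have h1u : (0:ℝ) < 1 - u₁ ^ 2 := by nlinarith [sq_abs u₁, abs_nonneg u₁]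
    have hs_ne : Real.sqrt (1 - u₁ ^ 2) ≠ 0 := ne_of_gt (Real.sqrt_pos.2 h1u)
    calc ∫ z', (z - u₁ / Real.sqrt (1 - u₁ ^ 2) * z') *
          iteratedDeriv (k + 1) h (u₁ * z + Real.sqrt (1 - u₁ ^ 2) * z') ∂(gaussianReal 0 1)
        = ∫ z', (z * iteratedDeriv (k + 1) h (u₁ * z + Real.sqrt (1 - u₁ ^ 2) * z')
            - u₁ / Real.sqrt (1 - u₁ ^ 2) *
              (z' * iteratedDeriv (k + 1) h (u₁ * z + Real.sqrt (1 - u₁ ^ 2) * z')))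
            ∂(gaussianReal 0 1) := by
          refine integral_congr_ae (ae_of_all _ fun z' => ?_)
          ring
      _ = z * Fz h (k + 1) u₁ z - u₁ / Real.sqrt (1 - u₁ ^ 2) *
            ∫ z', z' * iteratedDeriv (k + 1) h (u₁ * z + Real.sqrt (1 - u₁ ^ 2) * z')
              ∂(gaussianReal 0 1) := by
          rw [integral_sub (hg1int.const_mul z) (hzg1int.const_mul _),
            MeasureTheory.integral_const_mul, MeasureTheory.integral_const_mul]
          rfl
      _ = z * Fz h (k + 1) u₁ z - u₁ * Fz h (k + 2) u₁ z := by
          rw [hstein]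
          field_simp
  rw [hval] at hDer
  exact hDer

end Main

set_option maxHeartbeats 1000000 in
/-- Derivative recursion from the proof of Theorem 2, part 2.(a)(i): with
`J_k(u) = E_Z[(E_{Z'}[h^{(k)}(uZ + √(1−u²)Z')])²]`, for `0 ≤ k ≤ K−1` and `u ∈ [0,1)`,
`J_k'(u) = 2u·J_{k+1}(u)`. -/
theorem gaussian_functional_deriv_recursion
    (K : ℕ) (hK : 1 ≤ K) (C : ℝ) (hC : 0 < C)
    (l : ℝ) (hl0 : 0 ≤ l) (hl : l < 1 / 4)
    (h : ℝ → ℝ)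
    (hdiff : ∀ j < K + 1, Differentiable ℝ (iteratedDeriv j h))
    (hbdd : ∀ j ≤ K + 1, ∀ z, |iteratedDeriv j h z| ≤ C * Real.exp (l * z ^ 2))
    (J : ℕ → ℝ → ℝ)
    (hJ : J = fun k u =>
      ∫ z, (∫ z', iteratedDeriv k h (u * z + Real.sqrt (1 - u ^ 2) * z')
          ∂(gaussianReal 0 1)) ^ 2 ∂(gaussianReal 0 1)) :
    ∀ k < K, ∀ u : ℝ, 0 ≤ u → u < 1 →
      HasDerivAt (J k) (2 * u * J (k + 1) u) u := by
  subst hJ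
  intro k hkK u₀ hu0 hu1
  have hu₀1 : |u₀| ≤ 1 := by rw [abs_of_nonneg hu0]; linarith
  have hu₀1' : |u₀| < 1 := by rwa [abs_of_nonneg hu0]
  have hCn : 0 ≤ C := le_of_lt hC
  have hM := Mconst_nonneg (l := l)
  set M : ℝ := Mconst l with hMdef
  have hεpos : (0:ℝ) < (1 - u₀) / 2 := by linarith
  have hmem : ∀ u ∈ Metric.ball u₀ ((1 - u₀) / 2), |u| < 1 := by
    intro u hu
    have hd := Metric.mem_ball.1 hu
    rw [Real.dist_eq] at hd
    have := abs_lt.1 hd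
    rw [abs_lt]
    constructor <;> nlinarith
  -- the exponential rewriting
  have hexp : ∀ z : ℝ, Real.exp (2 * l * z ^ 2) = Real.exp (l * z ^ 2) * Real.exp (l * z ^ 2) :=
    fun z => by rw [← Real.exp_add]; ring_nf
  -- generic integrability of products of two F's with a possible z factor
  have hFb : ∀ j : ℕ, j ≤ K + 1 → ∀ u z : ℝ, |u| ≤ 1 →
      |Fz h j u z| ≤ C * M * Real.exp (l * z ^ 2) :=
    fun j hj u z hu => Fz_bound hl0 hl hdiff hbdd j hj u z hu
  have hprodbound : ∀ j j' : ℕ, j ≤ K + 1 → j' ≤ K + 1 → ∀ u z : ℝ, |u| ≤ 1 →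
      |Fz h j u z * Fz h j' u z| ≤ (C * M) ^ 2 * Real.exp (2 * l * z ^ 2) := by
    intro j j' hj hj' u z hu
    rw [abs_mul, hexp z]
    have h1 := hFb j hj u z hu
    have h2 := hFb j' hj' u z hu
    have hCM : (0:ℝ) ≤ C * M * Real.exp (l * z ^ 2) := by positivity
    calc |Fz h j u z| * |Fz h j' u z|
        ≤ (C * M * Real.exp (l * z ^ 2)) * (C * M * Real.exp (l * z ^ 2)) :=
          mul_le_mul h1 h2 (abs_nonneg _) hCM
      _ = (C * M) ^ 2 * (Real.exp (l * z ^ 2) * Real.exp (l * z ^ 2)) := by ring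
  have hIprod : ∀ j j' : ℕ, j ≤ K + 1 → j' ≤ K + 1 → ∀ u : ℝ, |u| ≤ 1 →
      Integrable (fun z => Fz h j u z * Fz h j' u z) (gaussianReal 0 1) := by
    intro j j' hj hj' u hu
    have m1 := (Fz_meas hdiff j hj u).measurable
    have m2 := (Fz_meas hdiff j' hj' u).measurable
    refine integrable_gauss_of_le ((m1.mul m2).aestronglyMeasurable)
      (show 2 * l < 1 / 2 by linarith) (B := (C * M) ^ 2) (fun z => ?_)
    have h1 := hprodbound j j' hj hj' u z hu
    refine h1.trans ?_
    have h3 : 0 ≤ (C * M) ^ 2 * Real.exp (2 * l * z ^ 2) * |z| :=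
      mul_nonneg (mul_nonneg (sq_nonneg _) (Real.exp_nonneg _)) (abs_nonneg z)
    nlinarith [h3]
  have hIzprod : ∀ j j' : ℕ, j ≤ K + 1 → j' ≤ K + 1 → ∀ u : ℝ, |u| ≤ 1 →
      Integrable (fun z => z * (Fz h j u z * Fz h j' u z)) (gaussianReal 0 1) := by
    intro j j' hj hj' u hu
    have m1 := (Fz_meas hdiff j hj u).measurable
    have m2 := (Fz_meas hdiff j' hj' u).measurable
    refine integrable_gauss_of_le ((measurable_id.mul (m1.mul m2)).aestronglyMeasurable)
      (show 2 * l < 1 / 2 by linarith) (B := (C * M) ^ 2) (fun z => ?_)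
    rw [abs_mul]
    have h1 := hprodbound j j' hj hj' u z hu
    calc |z| * |Fz h j u z * Fz h j' u z|
        ≤ |z| * ((C * M) ^ 2 * Real.exp (2 * l * z ^ 2)) :=
          mul_le_mul_of_nonneg_left h1 (abs_nonneg z)
      _ = (C * M) ^ 2 * (|z| * Real.exp (2 * l * z ^ 2)) := by ring
      _ ≤ (C * M) ^ 2 * ((1 + |z|) * Real.exp (2 * l * z ^ 2)) := by
          refine mul_le_mul_of_nonneg_left ?_ (by positivity)
          refine mul_le_mul_of_nonneg_right ?_ (Real.exp_nonneg _)
          linarith [abs_nonneg z]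
  -- outer dominated differentiation
  have hbound : ∀ᵐ z ∂(gaussianReal 0 1), ∀ u ∈ Metric.ball u₀ ((1 - u₀) / 2),
      ‖2 * Fz h k u z * (z * Fz h (k + 1) u z - u * Fz h (k + 2) u z)‖ ≤
        2 * (C * M) ^ 2 * ((1 + |z|) * Real.exp (2 * l * z ^ 2)) := by
    refine ae_of_all _ fun z u hu => ?_
    have hu1' : |u| ≤ 1 := le_of_lt (hmem u hu)
    have b1 := hFb k (by omega) u z hu1'
    have b2 := hFb (k + 1) (by omega) u z hu1'
    have b3 := hFb (k + 2) (by omega) u z hu1'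
    have hCMe : (0:ℝ) ≤ C * M * Real.exp (l * z ^ 2) := by positivity
    have h4 : |z * Fz h (k + 1) u z - u * Fz h (k + 2) u z| ≤
        (|z| + 1) * (C * M * Real.exp (l * z ^ 2)) := by
      calc |z * Fz h (k + 1) u z - u * Fz h (k + 2) u z|
          ≤ |z * Fz h (k + 1) u z| + |u * Fz h (k + 2) u z| := abs_sub _ _
        _ = |z| * |Fz h (k + 1) u z| + |u| * |Fz h (k + 2) u z| := by
            rw [abs_mul, abs_mul]
        _ ≤ |z| * (C * M * Real.exp (l * z ^ 2)) + 1 * (C * M * Real.exp (l * z ^ 2)) := by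
            refine add_le_add (mul_le_mul_of_nonneg_left b2 (abs_nonneg z)) ?_
            exact mul_le_mul hu1' b3 (abs_nonneg _) zero_le_one
        _ = (|z| + 1) * (C * M * Real.exp (l * z ^ 2)) := by ring
    rw [Real.norm_eq_abs, abs_mul, abs_mul]
    calc |(2:ℝ)| * |Fz h k u z| * |z * Fz h (k + 1) u z - u * Fz h (k + 2) u z|
        ≤ |(2:ℝ)| * (C * M * Real.exp (l * z ^ 2)) *
            ((|z| + 1) * (C * M * Real.exp (l * z ^ 2))) := by
          refine mul_le_mul ?_ h4 (abs_nonneg _) (by positivity)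
          exact mul_le_mul_of_nonneg_left b1 (abs_nonneg 2)
      _ = 2 * (C * M) ^ 2 * ((1 + |z|) * (Real.exp (l * z ^ 2) * Real.exp (l * z ^ 2))) := by
          rw [abs_of_nonneg (by norm_num : (0:ℝ) ≤ 2)]
          ring
      _ = 2 * (C * M) ^ 2 * ((1 + |z|) * Real.exp (2 * l * z ^ 2)) := by rw [← hexp z]
  have hboundint : Integrable
      (fun z => 2 * (C * M) ^ 2 * ((1 + |z|) * Real.exp (2 * l * z ^ 2)))
      (gaussianReal 0 1) := by
    refine integrable_gauss_of_le
      (Continuous.aestronglyMeasurable (by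
        exact continuous_const.mul ((continuous_const.add continuous_abs).mul
          (Real.continuous_exp.comp (continuous_const.mul (continuous_pow 2))))))
      (show 2 * l < 1 / 2 by linarith) (B := 2 * (C * M) ^ 2) (fun z => ?_)
    rw [abs_of_nonneg (by positivity)]
  have hdiffa : ∀ᵐ z ∂(gaussianReal 0 1), ∀ u ∈ Metric.ball u₀ ((1 - u₀) / 2),
      HasDerivAt (fun u => Fz h k u z ^ 2)
        (2 * Fz h k u z * (z * Fz h (k + 1) u z - u * Fz h (k + 2) u z)) u := by
    refine ae_of_all _ fun z u hu => ?_
    have hDu := Fz_hasDerivAt_u hl0 hl hdiff hbdd k (by omega) z u (hmem u hu)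
    have := hDu.pow 2
    refine this.congr_deriv ?_
    push_cast
    ring
  have mk0 := (Fz_meas hdiff k (by omega : k ≤ K + 1) u₀).measurable
  have mk1 := (Fz_meas hdiff (k + 1) (by omega : k + 1 ≤ K + 1) u₀).measurable
  have mk2 := (Fz_meas hdiff (k + 2) (by omega : k + 2 ≤ K + 1) u₀).measurable
  have hF'measOut : AEStronglyMeasurable
      (fun z => 2 * Fz h k u₀ z * (z * Fz h (k + 1) u₀ z - u₀ * Fz h (k + 2) u₀ z))
      (gaussianReal 0 1) := by
    apply Measurable.aestronglyMeasurable
    exact (mk0.const_mul 2).mul ((measurable_id.mul mk1).sub (mk2.const_mul u₀))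
  have key := hasDerivAt_integral_of_dominated_loc_of_deriv_le (μ := gaussianReal 0 1)
    (F := fun u z => Fz h k u z ^ 2)
    (F' := fun u z => 2 * Fz h k u z * (z * Fz h (k + 1) u z - u * Fz h (k + 2) u z))
    (x₀ := u₀)
    (bound := fun z => 2 * (C * M) ^ 2 * ((1 + |z|) * Real.exp (2 * l * z ^ 2)))
    (Metric.ball_mem_nhds u₀ hεpos)
    (Eventually.of_forall fun u =>
      ((Fz_meas hdiff k (by omega) u).measurable.pow_const 2).aestronglyMeasurable)
    (by
      have := hIprod k k (by omega) (by omega) u₀ hu₀1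
      refine this.congr (ae_of_all _ fun z => ?_)
      exact (pow_two (Fz h k u₀ z)).symm)
    hF'measOut hbound hboundint hdiffa
  have hDer := key.2
  -- compute the derivative value via Stein's lemma
  have hsteinOut : ∫ z, z * (Fz h k u₀ z * Fz h (k + 1) u₀ z) ∂(gaussianReal 0 1)
      = ∫ z, (u₀ * Fz h (k + 1) u₀ z * Fz h (k + 1) u₀ z +
          Fz h k u₀ z * (u₀ * Fz h (k + 2) u₀ z)) ∂(gaussianReal 0 1) := by
    refine stein_gauss (B := 2 * (C * M) ^ 2) (c := 2 * l)
      (fun z => (Fz_hasDerivAt_z hl0 hl hdiff hbdd k (by omega) u₀ z hu₀1).mul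
        (Fz_hasDerivAt_z hl0 hl hdiff hbdd (k + 1) (by omega) u₀ z hu₀1))
      (by linarith) (fun z => ?_) (fun z => ?_)
    · have := hprodbound k (k + 1) (by omega) (by omega) u₀ z hu₀1
      nlinarith [Real.exp_nonneg (2 * l * z ^ 2), sq_nonneg (C * M)]
    · have h1 := hprodbound (k + 1) (k + 1) (by omega) (by omega) u₀ z hu₀1
      have h2 := hprodbound k (k + 2) (by omega) (by omega) u₀ z hu₀1
      have he := Real.exp_nonneg (2 * l * z ^ 2)
      calc |u₀ * Fz h (k + 1) u₀ z * Fz h (k + 1) u₀ z +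
            Fz h k u₀ z * (u₀ * Fz h (k + 2) u₀ z)|
          ≤ |u₀ * Fz h (k + 1) u₀ z * Fz h (k + 1) u₀ z| +
            |Fz h k u₀ z * (u₀ * Fz h (k + 2) u₀ z)| := abs_add_le _ _
        _ = |u₀| * |Fz h (k + 1) u₀ z * Fz h (k + 1) u₀ z| +
            |u₀| * |Fz h k u₀ z * Fz h (k + 2) u₀ z| := by
            rw [← abs_mul, ← abs_mul]
            rw [show u₀ * Fz h (k + 1) u₀ z * Fz h (k + 1) u₀ z =
              u₀ * (Fz h (k + 1) u₀ z * Fz h (k + 1) u₀ z) from by ring, abs_mul,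
              show Fz h k u₀ z * (u₀ * Fz h (k + 2) u₀ z) =
              u₀ * (Fz h k u₀ z * Fz h (k + 2) u₀ z) from by ring, abs_mul]
        _ ≤ 1 * ((C * M) ^ 2 * Real.exp (2 * l * z ^ 2)) +
            1 * ((C * M) ^ 2 * Real.exp (2 * l * z ^ 2)) := by
            refine add_le_add (mul_le_mul hu₀1 h1 (abs_nonneg _) zero_le_one)
              (mul_le_mul hu₀1 h2 (abs_nonneg _) zero_le_one)
        _ = 2 * (C * M) ^ 2 * Real.exp (2 * l * z ^ 2) := by ring
  have hval : ∫ z, 2 * Fz h k u₀ z * (z * Fz h (k + 1) u₀ z - u₀ * Fz h (k + 2) u₀ z)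
        ∂(gaussianReal 0 1)
      = 2 * u₀ * ∫ z, Fz h (k + 1) u₀ z ^ 2 ∂(gaussianReal 0 1) := by
    have I1 := hIzprod k (k + 1) (by omega) (by omega) u₀ hu₀1
    have I2 := hIprod k (k + 2) (by omega) (by omega) u₀ hu₀1
    have I3 := hIprod (k + 1) (k + 1) (by omega) (by omega) u₀ hu₀1
    calc ∫ z, 2 * Fz h k u₀ z * (z * Fz h (k + 1) u₀ z - u₀ * Fz h (k + 2) u₀ z)
          ∂(gaussianReal 0 1)
        = ∫ z, (2 * (z * (Fz h k u₀ z * Fz h (k + 1) u₀ z)) -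
            2 * u₀ * (Fz h k u₀ z * Fz h (k + 2) u₀ z)) ∂(gaussianReal 0 1) := by
          refine integral_congr_ae (ae_of_all _ fun z => ?_); ring
      _ = 2 * ∫ z, z * (Fz h k u₀ z * Fz h (k + 1) u₀ z) ∂(gaussianReal 0 1) -
            2 * u₀ * ∫ z, Fz h k u₀ z * Fz h (k + 2) u₀ z ∂(gaussianReal 0 1) := by
          rw [integral_sub (I1.const_mul 2) (I2.const_mul (2 * u₀)),
            MeasureTheory.integral_const_mul, MeasureTheory.integral_const_mul]
      _ = 2 * ∫ z, (u₀ * Fz h (k + 1) u₀ z * Fz h (k + 1) u₀ z +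
            Fz h k u₀ z * (u₀ * Fz h (k + 2) u₀ z)) ∂(gaussianReal 0 1) -
            2 * u₀ * ∫ z, Fz h k u₀ z * Fz h (k + 2) u₀ z ∂(gaussianReal 0 1) := by
          rw [hsteinOut]
      _ = 2 * ∫ z, (u₀ * (Fz h (k + 1) u₀ z * Fz h (k + 1) u₀ z) +
            u₀ * (Fz h k u₀ z * Fz h (k + 2) u₀ z)) ∂(gaussianReal 0 1) -
            2 * u₀ * ∫ z, Fz h k u₀ z * Fz h (k + 2) u₀ z ∂(gaussianReal 0 1) := by
          congr 1
          refine congrArg _ (integral_congr_ae (ae_of_all _ fun z => ?_)); ring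
      _ = 2 * (u₀ * ∫ z, Fz h (k + 1) u₀ z * Fz h (k + 1) u₀ z ∂(gaussianReal 0 1) +
            u₀ * ∫ z, Fz h k u₀ z * Fz h (k + 2) u₀ z ∂(gaussianReal 0 1)) -
            2 * u₀ * ∫ z, Fz h k u₀ z * Fz h (k + 2) u₀ z ∂(gaussianReal 0 1) := by
          rw [integral_add (I3.const_mul u₀) (I2.const_mul u₀),
            MeasureTheory.integral_const_mul, MeasureTheory.integral_const_mul]
      _ = 2 * u₀ * ∫ z, Fz h (k + 1) u₀ z * Fz h (k + 1) u₀ z ∂(gaussianReal 0 1) := by ring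
      _ = 2 * u₀ * ∫ z, Fz h (k + 1) u₀ z ^ 2 ∂(gaussianReal 0 1) := by
          congr 1
          refine integral_congr_ae (ae_of_all _ fun z => ?_)
          exact (pow_two (Fz h (k + 1) u₀ z)).symm
  beta_reduce at hDer
  rw [hval] at hDer
  exact hDer
end

section
/- Let C > 0 and 0 ≤ λ < 1/4, and let h : ℝ → ℝ be twice differentiable with |h(z)| ≤ C·exp(λz²), |h'(z)| ≤ C·exp(λz²) and |h''(z)| ≤ C·exp(λz²) for all z ∈ ℝ. Define g(u) := E_Z[ ( E_{Z'}[ h(u·Z + sqrt(1−u²)·Z') ] )² ] for u ∈ [−1,1], where Z and Z' are independent standard Gaussian N(0,1) random variables. Then g(−u) = g(u) for all u ∈ [−1,1], and g is nondecreasing on [0,1]; consequently g(u) ≤ g(v) whenever |u| ≤ |v|. -/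
open MeasureTheory ProbabilityTheory Real
open scoped NNReal ENNReal


/-- Integrability of `exp (t·z²)` against the standard Gaussian for `t < 1/2`. -/
lemma int_exp_sq {t : ℝ} (ht : t < 1/2) :
    Integrable (fun z => Real.exp (t * z^2)) (gaussianReal 0 1) := by
  rw [gaussianReal_of_var_ne_zero 0 one_ne_zero,
    integrable_withDensity_iff (measurable_gaussianPDF 0 1)
      (Filter.Eventually.of_forall fun x => ENNReal.ofReal_lt_top)]
  have : (fun x => Real.exp (t * x^2) * (gaussianPDF 0 1 x).toReal)
      = fun x => (Real.sqrt (2*π))⁻¹ * Real.exp (-(1/2 - t) * x^2) := by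
    ext x
    rw [gaussianPDF, ENNReal.toReal_ofReal (gaussianPDFReal_nonneg 0 1 x), gaussianPDFReal]
    simp only [NNReal.coe_one, mul_one, sub_zero]
    rw [mul_comm, mul_assoc, ← Real.exp_add]
    congr 1
    ring
  rw [this]
  exact (integrable_exp_neg_mul_sq (by linarith)).const_mul _

/-- Pointwise product identity for Gaussian densities (completing the square). -/
lemma pdf_prod_eq (a b x z : ℝ) (hb : b ≠ 0) :
    gaussianPDFReal 0 1 z * gaussianPDFReal (a*z) ⟨b^2, sq_nonneg b⟩ x
      = gaussianPDFReal 0 ⟨a^2+b^2, by positivity⟩ x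
        * gaussianPDFReal (a*x/(a^2+b^2)) ⟨b^2/(a^2+b^2), by positivity⟩ z := by
  have ht : (0:ℝ) < a^2 + b^2 := by positivity
  have hb2 : (0:ℝ) < b^2 := by positivity
  simp only [gaussianPDFReal, NNReal.coe_mk, NNReal.coe_one, sub_zero, mul_one]
  have h1 : Real.sqrt (2*π) * Real.sqrt (2*π*b^2)
      = Real.sqrt (2*π*(a^2+b^2)) * Real.sqrt (2*π*(b^2/(a^2+b^2))) := by
    rw [← Real.sqrt_mul (by positivity), ← Real.sqrt_mul (by positivity)]
    congr 1
    field_simp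
  have h2 : -z^2/2 + -(x - a*z)^2/(2*b^2)
      = -x^2/(2*(a^2+b^2)) + -(z - a*x/(a^2+b^2))^2/(2*(b^2/(a^2+b^2))) := by
    field_simp
    ring
  calc (Real.sqrt (2*π))⁻¹ * rexp (-z^2/2) * ((Real.sqrt (2*π*b^2))⁻¹ * rexp (-(x-a*z)^2/(2*b^2)))
      = (Real.sqrt (2*π) * Real.sqrt (2*π*b^2))⁻¹ * rexp (-z^2/2 + -(x-a*z)^2/(2*b^2)) := by
        rw [mul_inv, Real.exp_add]; ring
    _ = (Real.sqrt (2*π*(a^2+b^2)) * Real.sqrt (2*π*(b^2/(a^2+b^2))))⁻¹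
        * rexp (-x^2/(2*(a^2+b^2)) + -(z - a*x/(a^2+b^2))^2/(2*(b^2/(a^2+b^2)))) := by
        rw [h1, h2]
    _ = _ := by rw [mul_inv, Real.exp_add]; dsimp only [NNReal.toReal]; ring

/-- The image of the product of two standard Gaussians under `(z, z') ↦ a z + b z'`
is a centered Gaussian with variance `a² + b²`. -/
lemma gauss_conv (a b : ℝ) :
    ((gaussianReal 0 1).prod (gaussianReal 0 1)).map (fun p : ℝ × ℝ => a * p.1 + b * p.2)
      = gaussianReal 0 ⟨a^2+b^2, by positivity⟩ := by
  have hT : Measurable (fun p : ℝ × ℝ => a * p.1 + b * p.2) := by fun_prop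
  by_cases hb : b = 0
  · subst hb
    have heq : (fun p : ℝ × ℝ => a * p.1 + 0 * p.2) = (a * ·) ∘ Prod.fst := by
      ext p; simp
    rw [heq, ← Measure.map_map (f := Prod.fst) (g := (a * ·)) (by fun_prop) measurable_fst,
      Measure.map_fst_prod]
    simp only [measure_univ, one_smul]
    rw [gaussianReal_map_const_mul a]
    congr 1
    · ring
    · ext; simp; rfl
  · have hb' : b ≠ 0 := hb
    have htpos : (0:ℝ) < a^2 + b^2 := by positivity
    have hb2 : (⟨b^2, sq_nonneg b⟩ : ℝ≥0) ≠ 0 := fun hcon =>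
      (by positivity : (0:ℝ) < b^2).ne' (congrArg Subtype.val hcon : _)
    have hV : (⟨a^2+b^2, by positivity⟩ : ℝ≥0) ≠ 0 := fun hcon =>
      htpos.ne' (congrArg Subtype.val hcon : _)
    have hW : (⟨b^2/(a^2+b^2), by positivity⟩ : ℝ≥0) ≠ 0 := fun hcon =>
      (by positivity : (0:ℝ) < b^2/(a^2+b^2)).ne'
        (congrArg Subtype.val hcon : _)
    have hG : Measurable (fun q : ℝ × ℝ => gaussianPDF (a * q.1) ⟨b^2, sq_nonneg b⟩ q.2) := by
      apply Measurable.ennreal_ofReal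
      unfold gaussianPDFReal
      fun_prop
    ext s hs
    rw [Measure.map_apply hT hs, Measure.prod_apply (hT hs)]
    have slice : ∀ z : ℝ, (Prod.mk z ⁻¹' ((fun p : ℝ × ℝ => a * p.1 + b * p.2) ⁻¹' s))
        = (fun z' => b * z' + a * z) ⁻¹' s := by
      intro z; ext z'
      simp [Set.mem_preimage, add_comm]
    have hmap : ∀ z : ℝ, (gaussianReal 0 1) ((fun z' => b * z' + a * z) ⁻¹' s)
        = ∫⁻ x in s, gaussianPDF (a*z) ⟨b^2, sq_nonneg b⟩ x := by
      intro z
      rw [← Measure.map_apply (by fun_prop) hs]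
      have comp : (fun z' : ℝ => b * z' + a * z) = (· + a * z) ∘ (b * ·) := rfl
      rw [comp, ← Measure.map_map (f := (b * ·)) (g := (· + a * z)) (by fun_prop) (by fun_prop),
        gaussianReal_map_const_mul b, gaussianReal_map_add_const (a*z)]
      simp only [mul_zero, zero_add, mul_one]
      exact gaussianReal_apply _ hb2 s
    simp_rw [slice, hmap]
    have hinner : Measurable (fun z : ℝ => ∫⁻ x in s, gaussianPDF (a*z) ⟨b^2, sq_nonneg b⟩ x) :=
      Measurable.lintegral_prod_right' (f := fun q : ℝ × ℝ =>
        gaussianPDF (a * q.1) ⟨b^2, sq_nonneg b⟩ q.2) hG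
    calc ∫⁻ z, (∫⁻ x in s, gaussianPDF (a*z) ⟨b^2, sq_nonneg b⟩ x) ∂(gaussianReal 0 1)
        = ∫⁻ z, gaussianPDF 0 1 z * ∫⁻ x in s, gaussianPDF (a*z) ⟨b^2, sq_nonneg b⟩ x := by
          rw [gaussianReal_of_var_ne_zero 0 one_ne_zero,
            lintegral_withDensity_eq_lintegral_mul _ (measurable_gaussianPDF 0 1) hinner]
          rfl
      _ = ∫⁻ z, ∫⁻ x in s, gaussianPDF 0 1 z * gaussianPDF (a*z) ⟨b^2, sq_nonneg b⟩ x := by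
          congr 1; ext z
          exact (lintegral_const_mul _ (measurable_gaussianPDF _ _)).symm
      _ = ∫⁻ x in s, ∫⁻ z, gaussianPDF 0 1 z * gaussianPDF (a*z) ⟨b^2, sq_nonneg b⟩ x := by
          apply lintegral_lintegral_swap
          exact (((measurable_gaussianPDF 0 1).comp measurable_fst).mul
            (hG.comp (measurable_fst.prodMk measurable_snd))).aemeasurable
      _ = ∫⁻ x in s, gaussianPDF 0 ⟨a^2+b^2, by positivity⟩ x := by
          apply lintegral_congr
          intro x
          have pt : ∀ z : ℝ, gaussianPDF 0 1 z * gaussianPDF (a*z) ⟨b^2, sq_nonneg b⟩ x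
              = gaussianPDF 0 ⟨a^2+b^2, by positivity⟩ x
                * gaussianPDF (a*x/(a^2+b^2)) ⟨b^2/(a^2+b^2), by positivity⟩ z := by
            intro z
            simp only [gaussianPDF]
            rw [← ENNReal.ofReal_mul (gaussianPDFReal_nonneg _ _ _)]
            exact (congrArg ENNReal.ofReal (pdf_prod_eq a b x z hb)).trans
              (ENNReal.ofReal_mul (gaussianPDFReal_nonneg _ _ _))
          simp_rw [pt]
          exact (lintegral_const_mul _ (measurable_gaussianPDF _ _)).trans
            ((congrArg _ (lintegral_gaussianPDF_eq_one _ hW)).trans (mul_one _))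
      _ = gaussianReal 0 ⟨a^2+b^2, by positivity⟩ s := (gaussianReal_apply 0 hV s).symm

lemma gauss_map_lin (a b : ℝ) :
    ((gaussianReal 0 1).prod (gaussianReal 0 1)).map (fun p : ℝ × ℝ => a * p.1 + b * p.2)
      = (gaussianReal 0 1).map (fun z => Real.sqrt (a^2+b^2) * z) := by
  have : (fun z : ℝ => Real.sqrt (a^2+b^2) * z) = (Real.sqrt (a^2+b^2) * ·) := rfl
  rw [gauss_conv, this, gaussianReal_map_const_mul]
  congr 1
  · ring
  · ext
    simp [Real.sq_sqrt (by positivity : (0:ℝ) ≤ a^2+b^2)]; rfl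

lemma gauss_lin_integral (a b : ℝ) (F : ℝ → ℝ) (hF : StronglyMeasurable F) :
    ∫ p : ℝ × ℝ, F (a * p.1 + b * p.2) ∂((gaussianReal 0 1).prod (gaussianReal 0 1))
      = ∫ z, F (Real.sqrt (a^2+b^2) * z) ∂(gaussianReal 0 1) := by
  have hT : Measurable (fun p : ℝ × ℝ => a * p.1 + b * p.2) := by fun_prop
  have hS : Measurable (fun z : ℝ => Real.sqrt (a^2+b^2) * z) := by fun_prop
  have e1 := integral_map (μ := (gaussianReal 0 1).prod (gaussianReal 0 1))
    hT.aemeasurable (f := F) hF.aestronglyMeasurable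
  have e2 := integral_map (μ := gaussianReal 0 1) hS.aemeasurable (f := F)
    hF.aestronglyMeasurable
  rw [← e1, gauss_map_lin, e2]

/-- Jensen (Cauchy–Schwarz) for squares on a probability space. -/
lemma sq_integral_le {μ : Measure ℝ} [IsProbabilityMeasure μ] {f : ℝ → ℝ}
    (hf : Integrable f μ) (hf2 : Integrable (fun x => (f x)^2) μ) :
    (∫ x, f x ∂μ)^2 ≤ ∫ x, (f x)^2 ∂μ := by
  set m := ∫ x, f x ∂μ with hm
  have h0 : 0 ≤ ∫ x, (f x - m)^2 ∂μ := integral_nonneg fun x => sq_nonneg _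
  have hexp : (fun x => (f x - m)^2) = fun x => ((f x)^2 - (2*m) * f x) + m^2 := by
    ext x; ring
  have hB : Integrable (fun x => (2*m) * f x) μ := hf.const_mul (2*m)
  have hA : Integrable (fun x => (f x)^2 - (2*m) * f x) μ := hf2.sub hB
  rw [hexp, integral_add hA (integrable_const _), integral_sub hf2 hB,
    integral_const_mul, integral_const, probReal_univ] at h0
  simp only [ENNReal.toReal_one, smul_eq_mul, one_mul] at h0
  nlinarith [h0]

set_option maxHeartbeats 1000000 in
/-- Analytic core of Item 1 of Theorem 2 (case `f(t) = t²`): the functional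
`g(u) = E_Z[(E_{Z'}[h(uZ + √(1−u²)Z')])²]` is even and nondecreasing on `[0,1]`;
consequently `g(u) ≤ g(v)` whenever `|u| ≤ |v| ≤ 1`. -/
theorem overlap_functional_monotone
    (C : ℝ) (hC : 0 < C) (l : ℝ) (hl0 : 0 ≤ l) (hl : l < 1 / 4)
    (h : ℝ → ℝ)
    (hdiff : ∀ j < 2, Differentiable ℝ (iteratedDeriv j h))
    (hbdd : ∀ j ≤ 2, ∀ z, |iteratedDeriv j h z| ≤ C * Real.exp (l * z ^ 2))
    (g : ℝ → ℝ)
    (hg : g = fun u =>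
      ∫ z, (∫ z', h (u * z + Real.sqrt (1 - u ^ 2) * z')
          ∂(gaussianReal 0 1)) ^ 2 ∂(gaussianReal 0 1)) :
    (∀ u ∈ Set.Icc (-1 : ℝ) 1, g (-u) = g u) ∧
    MonotoneOn g (Set.Icc (0 : ℝ) 1) ∧
    ∀ u v : ℝ, |u| ≤ |v| → |v| ≤ 1 → g u ≤ g v := by
  have hcont : Continuous h := by
    have hd := hdiff 0 (by norm_num)
    rw [iteratedDeriv_zero] at hd
    exact hd.continuous
  have hb : ∀ z, |h z| ≤ C * Real.exp (l * z^2) := by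
    have := hbdd 0 (by norm_num)
    simpa [iteratedDeriv_zero] using this
  have hl2 : l < 1/2 := by linarith
  have h2l : 2*l < 1/2 := by linarith
  set γ : Measure ℝ := gaussianReal 0 1 with hγ
  set Ph : ℝ → ℝ → ℝ :=
    fun u z => ∫ z', h (u * z + Real.sqrt (1 - u ^ 2) * z') ∂γ with hPh
  have hPhd : ∀ u z, Ph u z = ∫ z', h (u * z + Real.sqrt (1 - u ^ 2) * z') ∂γ :=
    fun u z => rfl
  have hgu : ∀ u : ℝ, g u = ∫ z, (Ph u z)^2 ∂γ := fun u => by rw [hg]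
  have hsq : ∀ u : ℝ, u ∈ Set.Icc (-1:ℝ) 1 → u^2 + Real.sqrt (1-u^2)^2 = 1 := by
    intro u hu
    rw [Real.sq_sqrt (by nlinarith [hu.1, hu.2] : (0:ℝ) ≤ 1 - u^2)]
    ring
  have m1 : ∀ u : ℝ, StronglyMeasurable (Ph u) := by
    intro u
    exact ((hcont.comp (by fun_prop :
      Continuous (fun p : ℝ × ℝ => u * p.1 + Real.sqrt (1-u^2) * p.2))).stronglyMeasurable
      ).integral_prod_right'
  have m2 : ∀ u : ℝ, StronglyMeasurable (fun z => (Ph u z)^2) := by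
    intro u
    have := (m1 u).mul (m1 u)
    exact (m1 u).pow 2
  have hb2 : ∀ (u c z z' : ℝ), u^2 + c^2 = 1 →
      |h (u*z + c*z')| ≤ C * Real.exp (l*z^2) * Real.exp (l*z'^2) := by
    intro u c z z' hyp
    have hA : (u*z+c*z')^2 ≤ z^2+z'^2 := by nlinarith [sq_nonneg (u*z' - c*z)]
    calc |h (u*z+c*z')| ≤ C * Real.exp (l * (u*z+c*z')^2) := hb _
      _ ≤ C * Real.exp (l*z^2) * Real.exp (l*z'^2) := by
          rw [mul_assoc, ← Real.exp_add]
          refine mul_le_mul_of_nonneg_left (Real.exp_le_exp.mpr ?_) hC.le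
          nlinarith [mul_le_mul_of_nonneg_left hA hl0]
  have hint1 : ∀ (u c z : ℝ), u^2 + c^2 = 1 → Integrable (fun z' => h (u*z + c*z')) γ := by
    intro u c z hyp
    refine Integrable.mono' ((int_exp_sq hl2).const_mul (C * Real.exp (l*z^2))) ?_ ?_
    · exact (hcont.comp (by fun_prop)).aestronglyMeasurable
    · refine Filter.Eventually.of_forall fun z' => ?_
      rw [Real.norm_eq_abs]
      have := hb2 u c z z' hyp
      nlinarith [this]
  have K0 : (0:ℝ) ≤ ∫ z, Real.exp (l*z^2) ∂γ := integral_nonneg fun z => (Real.exp_pos _).le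
  set K : ℝ := ∫ z, Real.exp (l*z^2) ∂γ with hK
  have hPhb : ∀ u ∈ Set.Icc (-1:ℝ) 1, ∀ s, |Ph u s| ≤ C * K * Real.exp (l*s^2) := by
    intro u hu s
    have hyp := hsq u hu
    rw [hPhd]
    calc |∫ z', h (u * s + Real.sqrt (1 - u ^ 2) * z') ∂γ|
        ≤ ∫ z', |h (u * s + Real.sqrt (1 - u ^ 2) * z')| ∂γ := by
          simpa [Real.norm_eq_abs] using
            norm_integral_le_integral_norm (fun z' => h (u * s + Real.sqrt (1 - u ^ 2) * z'))
      _ ≤ ∫ z', C * Real.exp (l*s^2) * Real.exp (l*z'^2) ∂γ := by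
          refine integral_mono ((hint1 u _ s hyp).abs) ?_ ?_
          · exact (int_exp_sq hl2).const_mul _
          · intro z'
            exact hb2 u _ s z' hyp
      _ = C * K * Real.exp (l*s^2) := by
          rw [integral_const_mul]
          ring
  have hexpsq : ∀ t s : ℝ, (Real.exp (t*s^2))^2 = Real.exp (2*t*s^2) := by
    intro t s
    rw [pow_two, ← Real.exp_add]
    congr 1
    ring
  have pt2 : ∀ v ∈ Set.Icc (-1:ℝ) 1, ∀ s : ℝ,
      (Ph v s)^2 ≤ (C*K)^2 * Real.exp (2*l*s^2) := by
    intro v hv s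
    rw [← sq_abs]
    calc |Ph v s|^2 ≤ (C*K*Real.exp (l*s^2))^2 := by
          nlinarith [hPhb v hv s, abs_nonneg (Ph v s)]
      _ = (C*K)^2 * Real.exp (2*l*s^2) := by rw [mul_pow, hexpsq]
  have hPh2int : ∀ u ∈ Set.Icc (-1:ℝ) 1, Integrable (fun z => (Ph u z)^2) γ := by
    intro u hu
    refine Integrable.mono' ((int_exp_sq h2l).const_mul ((C*K)^2))
      ((m2 u).aestronglyMeasurable) (Filter.Eventually.of_forall fun z => ?_)
    rw [Real.norm_eq_abs, abs_of_nonneg (sq_nonneg _)]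
    exact pt2 u hu z
  have key : ∀ (u a b z : ℝ), u ∈ Set.Icc (-1:ℝ) 1 → a^2 + b^2 = 1 - u^2 →
      ∫ p : ℝ × ℝ, h (u*z + (a*p.1 + b*p.2)) ∂(γ.prod γ) = Ph u z := by
    intro u a b z hu hab
    have hFsm : StronglyMeasurable (fun s => h (u*z + s)) :=
      (hcont.comp (continuous_const.add continuous_id)).stronglyMeasurable
    have e := gauss_lin_integral a b (fun s => h (u*z + s)) hFsm
    rw [hγ]
    rw [e]
    simp only [hab]
    rfl
  have hneg : γ.map (fun z : ℝ => -z) = γ := by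
    have hf : (fun z : ℝ => -z) = ((-1 : ℝ) * ·) := by ext z; ring
    rw [hγ, hf, gaussianReal_map_const_mul]
    norm_num
  have negint : ∀ (F : ℝ → ℝ), StronglyMeasurable F →
      ∫ z, F (-z) ∂γ = ∫ z, F z ∂γ := by
    intro F hF
    have e := integral_map (μ := γ) (measurable_neg).aemeasurable (f := F)
      hF.aestronglyMeasurable
    rw [← e, hneg]
  have heven : ∀ u : ℝ, g (-u) = g u := by
    intro u
    rw [hgu, hgu]
    have e1 : ∀ z, Ph (-u) z = Ph u (-z) := by
      intro z
      rw [hPhd, hPhd]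
      simp only [neg_sq, neg_mul, mul_neg]
    calc ∫ z, (Ph (-u) z)^2 ∂γ = ∫ z, (Ph u (-z))^2 ∂γ :=
          integral_congr_ae (Filter.Eventually.of_forall fun z => by simp only [e1])
      _ = ∫ z, (Ph u z)^2 ∂γ := negint _ (m2 u)
  have hmono : MonotoneOn g (Set.Icc (0:ℝ) 1) := by
    intro u hu v hv huv
    rcases eq_or_lt_of_le hv.1 with hv0 | hv0
    · have hu0 : u = 0 := le_antisymm (hv0 ▸ huv) hu.1
      rw [hu0, ← hv0]
    · set w : ℝ := u / v with hw
      have hw0 : 0 ≤ w := div_nonneg hu.1 hv.1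
      have hw1 : w ≤ 1 := (div_le_one hv0).mpr huv
      have hwv : w * v = u := div_mul_cancel₀ u hv0.ne'
      have hu1 : u ∈ Set.Icc (-1:ℝ) 1 := ⟨by linarith [hu.1], hu.2⟩
      have hv1 : v ∈ Set.Icc (-1:ℝ) 1 := ⟨by linarith [hv.1], hv.2⟩
      have hwI : w ∈ Set.Icc (-1:ℝ) 1 := ⟨by linarith, hw1⟩
      set cw : ℝ := Real.sqrt (1 - w^2) with hcw
      set cv : ℝ := Real.sqrt (1 - v^2) with hcv
      have hcw2 : w^2 + cw^2 = 1 := hsq w hwI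
      have hcv2 : v^2 + cv^2 = 1 := hsq v hv1
      set a : ℝ := v * cw with ha
      have hu2 : u^2 = w^2 * v^2 := by rw [← hwv]; ring
      have hab : a^2 + cv^2 = 1 - u^2 := by
        have h1 : a^2 = v^2 * cw^2 := by rw [ha]; ring
        have h2 : cw^2 = 1 - w^2 := by linarith [hcw2]
        have h3 : cv^2 = 1 - v^2 := by linarith [hcv2]
        rw [h1, h2, h3, hu2]
        ring
      -- integrability on the product for step 1
      have hintprod : ∀ z : ℝ,
          Integrable (fun p : ℝ × ℝ => h (u*z + (a*p.1 + cv*p.2))) (γ.prod γ) := by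
        intro z
        refine Integrable.mono'
          (((int_exp_sq hl2).mul_prod (int_exp_sq hl2)).const_mul (C * Real.exp (l*z^2)))
          ((hcont.comp (by fun_prop)).aestronglyMeasurable)
          (Filter.Eventually.of_forall fun p => ?_)
        rw [Real.norm_eq_abs]
        have hCS3 : (u*z + (a*p.1 + cv*p.2))^2 ≤ z^2 + p.1^2 + p.2^2 := by
          nlinarith [sq_nonneg (u*p.1 - a*z), sq_nonneg (u*p.2 - cv*z),
            sq_nonneg (a*p.2 - cv*p.1), hab]
        have hEB : Real.exp (l * (u*z + (a*p.1+cv*p.2))^2)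
            ≤ Real.exp (l*z^2) * (Real.exp (l*p.1^2) * Real.exp (l*p.2^2)) := by
          rw [← Real.exp_add, ← Real.exp_add]
          refine Real.exp_le_exp.mpr ?_
          nlinarith [mul_le_mul_of_nonneg_left hCS3 hl0]
        calc |h (u*z + (a*p.1 + cv*p.2))|
            ≤ C * Real.exp (l * (u*z + (a*p.1 + cv*p.2))^2) := hb _
          _ ≤ C * Real.exp (l*z^2) * (Real.exp (l*p.1^2) * Real.exp (l*p.2^2)) :=
              le_trans (mul_le_mul_of_nonneg_left hEB hC.le) (le_of_eq (by ring))
      -- Step 1: semigroup identity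
      have step1 : ∀ z, Ph u z = ∫ z', Ph v (w*z + cw*z') ∂γ := by
        intro z
        have hrw : ∀ z' z'' : ℝ, v * (w*z + cw*z') + cv*z'' = u*z + (a*z' + cv*z'') := by
          intro z' z''
          rw [← hwv]
          ring
        calc Ph u z = ∫ p : ℝ × ℝ, h (u*z + (a*p.1 + cv*p.2)) ∂(γ.prod γ) :=
              (key u a cv z hu1 hab).symm
          _ = ∫ z', ∫ z'', h (u*z + (a*z' + cv*z'')) ∂γ ∂γ :=
              (integral_integral (f := fun z' z'' => h (u*z + (a*z' + cv*z'')))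
                (hintprod z)).symm
          _ = ∫ z', Ph v (w*z + cw*z') ∂γ := by
              refine integral_congr_ae (Filter.Eventually.of_forall fun z' => ?_)
              show (∫ z'', h (u*z + (a*z' + cv*z'')) ∂γ) = Ph v (w*z + cw*z')
              rw [hPhd v (w*z + cw*z')]
              refine integral_congr_ae (Filter.Eventually.of_forall fun z'' => ?_)
              show h (u*z + (a*z' + cv*z'')) = h (v * (w*z + cw*z') + Real.sqrt (1-v^2) * z'')
              rw [← hcv, hrw z' z'']
      -- pointwise bound used in steps 2 and 3
      have pt3 : ∀ z z' : ℝ, (C*K)^2 * Real.exp (2*l*(w*z+cw*z')^2)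
          ≤ (C*K)^2 * Real.exp (2*l*z^2) * Real.exp (2*l*z'^2) := by
        intro z z'
        have hcs : (w*z + cw*z')^2 ≤ z^2 + z'^2 := by
          nlinarith [sq_nonneg (w*z' - cw*z), hcw2]
        have hE : Real.exp (2*l*(w*z+cw*z')^2) ≤ Real.exp (2*l*z^2) * Real.exp (2*l*z'^2) := by
          rw [← Real.exp_add]
          refine Real.exp_le_exp.mpr ?_
          nlinarith [mul_le_mul_of_nonneg_left hcs (by linarith : (0:ℝ) ≤ 2*l)]
        exact le_trans (mul_le_mul_of_nonneg_left hE (sq_nonneg _)) (le_of_eq (by ring))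
      have ptfull : ∀ z z' : ℝ, (Ph v (w*z + cw*z'))^2
          ≤ (C*K)^2 * Real.exp (2*l*z^2) * Real.exp (2*l*z'^2) := by
        intro z z'
        refine le_trans (pt2 v hv1 (w*z + cw*z')) (pt3 z z')
      -- slice integrability
      have sl1 : ∀ z : ℝ, Integrable (fun z' => Ph v (w*z + cw*z')) γ := by
        intro z
        refine Integrable.mono' ((int_exp_sq hl2).const_mul (C*K*Real.exp (l*z^2)))
          (((m1 v).comp_measurable (by fun_prop)).aestronglyMeasurable)
          (Filter.Eventually.of_forall fun z' => ?_)
        rw [Real.norm_eq_abs]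
        have hcs : (w*z + cw*z')^2 ≤ z^2 + z'^2 := by
          nlinarith [sq_nonneg (w*z' - cw*z), hcw2]
        calc |Ph v (w*z+cw*z')| ≤ C*K*Real.exp (l*(w*z+cw*z')^2) := hPhb v hv1 _
          _ ≤ C*K*Real.exp (l*z^2) * Real.exp (l*z'^2) := by
              have hE : Real.exp (l*(w*z+cw*z')^2) ≤ Real.exp (l*z^2) * Real.exp (l*z'^2) := by
                rw [← Real.exp_add]
                refine Real.exp_le_exp.mpr ?_
                nlinarith [mul_le_mul_of_nonneg_left hcs hl0]
              exact le_trans (mul_le_mul_of_nonneg_left hE (mul_nonneg hC.le K0))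
                (le_of_eq (by ring))
      have sl2 : ∀ z : ℝ, Integrable (fun z' => (Ph v (w*z + cw*z'))^2) γ := by
        intro z
        refine Integrable.mono' ((int_exp_sq h2l).const_mul ((C*K)^2 * Real.exp (2*l*z^2)))
          ((((m2 v).comp_measurable (by fun_prop))).aestronglyMeasurable)
          (Filter.Eventually.of_forall fun z' => ?_)
        rw [Real.norm_eq_abs, abs_of_nonneg (sq_nonneg _)]
        exact ptfull z z'
      have step2 : ∀ z, (∫ z', Ph v (w*z + cw*z') ∂γ)^2 ≤ ∫ z', (Ph v (w*z + cw*z'))^2 ∂γ :=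
        fun z => sq_integral_le (sl1 z) (sl2 z)
      -- Step 3
      have smOut : StronglyMeasurable (fun p : ℝ × ℝ => (Ph v (w*p.1 + cw*p.2))^2) :=
        (m2 v).comp_measurable (by fun_prop)
      have intprod2 : Integrable (fun p : ℝ × ℝ => (Ph v (w*p.1 + cw*p.2))^2) (γ.prod γ) := by
        refine Integrable.mono'
          (((int_exp_sq h2l).mul_prod (int_exp_sq h2l)).const_mul ((C*K)^2))
          smOut.aestronglyMeasurable (Filter.Eventually.of_forall fun p => ?_)
        rw [Real.norm_eq_abs, abs_of_nonneg (sq_nonneg _)]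
        calc (Ph v (w*p.1 + cw*p.2))^2
            ≤ (C*K)^2 * Real.exp (2*l*p.1^2) * Real.exp (2*l*p.2^2) := ptfull p.1 p.2
          _ = (C*K)^2 * (Real.exp (2*l*p.1^2) * Real.exp (2*l*p.2^2)) := by ring
      set K2 : ℝ := ∫ z', Real.exp (2*l*z'^2) ∂γ with hK2
      have int2 : Integrable (fun z => ∫ z', (Ph v (w*z + cw*z'))^2 ∂γ) γ := by
        refine Integrable.mono' ((int_exp_sq h2l).const_mul ((C*K)^2 * K2))
          (smOut.integral_prod_right').aestronglyMeasurable
          (Filter.Eventually.of_forall fun z => ?_)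
        rw [Real.norm_eq_abs, abs_of_nonneg (integral_nonneg fun z' => sq_nonneg _)]
        calc ∫ z', (Ph v (w*z + cw*z'))^2 ∂γ
            ≤ ∫ z', ((C*K)^2 * Real.exp (2*l*z^2)) * Real.exp (2*l*z'^2) ∂γ := by
              refine integral_mono (sl2 z) ((int_exp_sq h2l).const_mul _) fun z' => ?_
              have := ptfull z z'
              calc (Ph v (w*z + cw*z'))^2
                  ≤ (C*K)^2 * Real.exp (2*l*z^2) * Real.exp (2*l*z'^2) := this
                _ = ((C*K)^2 * Real.exp (2*l*z^2)) * Real.exp (2*l*z'^2) := by ring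
          _ = (C*K)^2 * K2 * Real.exp (2*l*z^2) := by
              rw [integral_const_mul]
              ring
      have e3 : (fun z => (Ph u z)^2) = fun z => (∫ z', Ph v (w*z + cw*z') ∂γ)^2 :=
        funext fun z => by rw [step1 z]
      have int1 : Integrable (fun z => (∫ z', Ph v (w*z + cw*z') ∂γ)^2) γ := by
        rw [← e3]
        exact hPh2int u hu1
      rw [hgu u, hgu v]
      calc ∫ z, (Ph u z)^2 ∂γ
          = ∫ z, (∫ z', Ph v (w*z+cw*z') ∂γ)^2 ∂γ := by rw [e3]
        _ ≤ ∫ z, (∫ z', (Ph v (w*z+cw*z'))^2 ∂γ) ∂γ := integral_mono int1 int2 step2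
        _ = ∫ p : ℝ × ℝ, (Ph v (w*p.1 + cw*p.2))^2 ∂(γ.prod γ) :=
            integral_integral (f := fun z z' => (Ph v (w*z+cw*z'))^2) intprod2
        _ = ∫ s, (Ph v s)^2 ∂γ := by
            have e := gauss_lin_integral w cw (fun s => (Ph v s)^2) (m2 v)
            have h1 : Real.sqrt (w^2+cw^2) = 1 := by rw [hcw2]; exact Real.sqrt_one
            rw [hγ]
            rw [e, h1]
            simp only [one_mul]
  refine ⟨fun u _ => heven u, hmono, ?_⟩
  intro u v h1 h2
  have hu2 : |u| ≤ 1 := h1.trans h2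
  have hgabs : ∀ x : ℝ, g x = g |x| := by
    intro x
    rcases abs_cases x with ⟨hx, _⟩ | ⟨hx, _⟩
    · rw [hx]
    · rw [hx, heven x]
  rw [hgabs u, hgabs v]
  exact hmono ⟨abs_nonneg u, hu2⟩ ⟨abs_nonneg v, h2⟩ h1
end

section
/- Let a ∈ ℝ, let Φ denote the cumulative distribution function of the standard real Gaussian measure N(0,1) (so Φ(t) = N(0,1)((−∞,t])), and let Z be distributed according to N(0,1). Then E[ Φ(a·Z)² ] = 1/4 + (1/(2π)) · arcsin( a²/(1+a²) ). -/
open MeasureTheory ProbabilityTheory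
open scoped NNReal ENNReal

section GaussianCdfSqMomentAux
open Real Filter Set

noncomputable def gpdf (x : ℝ) : ℝ := (Real.sqrt (2 * Real.pi))⁻¹ * Real.exp (-x ^ 2 / 2)

lemma gpdf_eq : gaussianPDFReal 0 1 = gpdf := by
  funext x
  simp [gaussianPDFReal, gpdf]

lemma continuous_gpdf : Continuous gpdf := by
  unfold gpdf; fun_prop

lemma gpdf_nonneg (x : ℝ) : 0 ≤ gpdf x := by
  unfold gpdf; positivity

lemma gpdf_le (x : ℝ) : gpdf x ≤ (Real.sqrt (2 * Real.pi))⁻¹ := by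
  unfold gpdf
  have h1 : Real.exp (-x ^ 2 / 2) ≤ 1 := Real.exp_le_one_iff.2 (by nlinarith [sq_nonneg x])
  have h2 : (0:ℝ) ≤ (Real.sqrt (2 * Real.pi))⁻¹ := by positivity
  nlinarith

lemma integrable_gpdf : Integrable gpdf := by
  have := integrable_gaussianPDFReal 0 1
  rwa [gpdf_eq] at this

lemma integral_gpdf : ∫ x, gpdf x = 1 := by
  have := integral_gaussianPDFReal_eq_one 0 one_ne_zero
  rwa [gpdf_eq] at this

lemma gaussianPDF_eq : gaussianPDF 0 1 = fun x => ((Real.toNNReal (gpdf x) : ℝ≥0) : ℝ≥0∞) := by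
  funext x
  rw [gaussianPDF, gpdf_eq]
  rfl

lemma integral_gauss (g : ℝ → ℝ) :
    ∫ z, g z ∂(gaussianReal 0 1) = ∫ z, gpdf z * g z := by
  rw [gaussianReal_of_var_ne_zero 0 one_ne_zero, gaussianPDF_eq,
    integral_withDensity_eq_integral_smul
      (continuous_gpdf.measurable.real_toNNReal : Measurable fun x => Real.toNNReal (gpdf x)) g]
  congr 1
  funext x
  rw [NNReal.smul_def, Real.coe_toNNReal _ (gpdf_nonneg x)]
  rfl

lemma integrable_gauss {g : ℝ → ℝ} (h : Integrable (fun z => gpdf z * g z)) :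
    Integrable g (gaussianReal 0 1) := by
  rw [gaussianReal_of_var_ne_zero 0 one_ne_zero, gaussianPDF_eq]
  rw [integrable_withDensity_iff_integrable_smul continuous_gpdf.measurable.real_toNNReal]
  refine h.congr (Eventually.of_forall fun x => ?_)
  simp only [NNReal.smul_def, Real.coe_toNNReal _ (gpdf_nonneg x), smul_eq_mul]

noncomputable def Phi0 (t : ℝ) : ℝ := ∫ x in Iic t, gpdf x

lemma Phi_eq_Phi0 : (fun t => ((gaussianReal 0 1) (Iic t)).toReal) = Phi0 := by
  funext t
  rw [gaussianReal_apply_eq_integral 0 one_ne_zero, gpdf_eq,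
    ENNReal.toReal_ofReal (setIntegral_nonneg measurableSet_Iic fun x _ => gpdf_nonneg x)]
  rfl

lemma Phi0_nonneg (t : ℝ) : 0 ≤ Phi0 t :=
  setIntegral_nonneg measurableSet_Iic fun x _ => gpdf_nonneg x

lemma Phi0_le_one (t : ℝ) : Phi0 t ≤ 1 := by
  rw [← integral_gpdf]
  exact setIntegral_le_integral integrable_gpdf (Eventually.of_forall gpdf_nonneg)

lemma hasDerivAt_Phi0 (t : ℝ) : HasDerivAt Phi0 (gpdf t) t := by
  have key : ∀ u : ℝ, Phi0 u = Phi0 0 + ∫ x in (0:ℝ)..u, gpdf x := by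
    intro u
    have := intervalIntegral.integral_Iic_sub_Iic (μ := volume) (f := gpdf) (a := (0:ℝ)) (b := u)
      integrable_gpdf.integrableOn integrable_gpdf.integrableOn
    unfold Phi0
    linarith [this]
  have h : HasDerivAt (fun u => Phi0 0 + ∫ x in (0:ℝ)..u, gpdf x) (gpdf t) t := by
    refine (intervalIntegral.integral_hasDerivAt_right
      (continuous_gpdf.intervalIntegrable 0 t)
      (continuous_gpdf.stronglyMeasurableAtFilter _ _)
      continuous_gpdf.continuousAt).const_add _
  exact h.congr_of_eventuallyEq (Eventually.of_forall key)

lemma continuous_Phi0 : Continuous Phi0 :=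
  continuous_iff_continuousAt.2 fun t => (hasDerivAt_Phi0 t).continuousAt

lemma Phi0_zero : Phi0 0 = 1 / 2 := by
  have heven : ∀ x : ℝ, gpdf (-x) = gpdf x := by
    intro x; unfold gpdf; rw [neg_pow]; ring_nf
  have h1 : Phi0 0 = ∫ x in Ioi (0:ℝ), gpdf x := by
    unfold Phi0
    rw [show (∫ x in Iic (0:ℝ), gpdf x) = ∫ x in Iic (0:ℝ), gpdf (-x) from by
      simp only [heven]]
    rw [integral_comp_neg_Iic]
    norm_num
  have h2 : (∫ x in Iic (0:ℝ), gpdf x) + ∫ x in Ioi (0:ℝ), gpdf x = 1 := by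
    rw [← integral_gpdf, ← setIntegral_union (Iic_disjoint_Ioi le_rfl) measurableSet_Ioi
      integrable_gpdf.integrableOn integrable_gpdf.integrableOn, Iic_union_Ioi,
      setIntegral_univ]
  have h3 : Phi0 0 = ∫ x in Iic (0:ℝ), gpdf x := rfl
  linarith

lemma hasDerivAt_gpdf (x : ℝ) : HasDerivAt gpdf (-x * gpdf x) x := by
  unfold gpdf
  have h1 : HasDerivAt (fun y : ℝ => -y ^ 2 / 2) (-x) x := by
    have := ((hasDerivAt_pow 2 x).neg).div_const 2
    refine this.congr_deriv ?_
    ring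
  have h2 := (h1.exp).const_mul (Real.sqrt (2 * Real.pi))⁻¹
  refine h2.congr_deriv ?_
  ring

lemma gpdf_sq_mul (a z : ℝ) :
    gpdf (a * z) ^ 2 * gpdf z
      = (Real.sqrt (2 * Real.pi))⁻¹ ^ 3 * Real.exp (-(a ^ 2 + 1 / 2) * z ^ 2) := by
  have h : Real.exp (-(a * z) ^ 2 / 2) ^ 2 * Real.exp (-z ^ 2 / 2)
      = Real.exp (-(a ^ 2 + 1 / 2) * z ^ 2) := by
    rw [pow_two, ← Real.exp_add, ← Real.exp_add]; congr 1; ring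
  unfold gpdf
  rw [mul_pow]
  calc (Real.sqrt (2 * Real.pi))⁻¹ ^ 2 * Real.exp (-(a * z) ^ 2 / 2) ^ 2
        * ((Real.sqrt (2 * Real.pi))⁻¹ * Real.exp (-z ^ 2 / 2))
      = (Real.sqrt (2 * Real.pi))⁻¹ ^ 3
        * (Real.exp (-(a * z) ^ 2 / 2) ^ 2 * Real.exp (-z ^ 2 / 2)) := by ring
    _ = _ := by rw [h]

lemma integrable_gpdf_sq_mul (a : ℝ) : Integrable (fun z => gpdf (a * z) ^ 2 * gpdf z) := by
  simp_rw [gpdf_sq_mul]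
  exact (integrable_exp_neg_mul_sq (by positivity : (0:ℝ) < a ^ 2 + 1 / 2)).const_mul _

lemma I1_eval (a : ℝ) :
    ∫ z, gpdf (a * z) ^ 2 * gpdf z = 1 / (2 * Real.pi * Real.sqrt (1 + 2 * a ^ 2)) := by
  simp_rw [gpdf_sq_mul, integral_const_mul]
  rw [integral_gaussian]
  have h1 : Real.pi / (a ^ 2 + 1 / 2) = 2 * Real.pi / (1 + 2 * a ^ 2) := by
    rw [div_eq_div_iff (by positivity) (by positivity)]; ring
  rw [h1, Real.sqrt_div (by positivity)]
  set s := Real.sqrt (2 * Real.pi) with hsdef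
  set r := Real.sqrt (1 + 2 * a ^ 2) with hrdef
  have hs : s ^ 2 = 2 * Real.pi := Real.sq_sqrt (by positivity)
  have hspos : 0 < s := Real.sqrt_pos.2 (by positivity)
  have hrpos : 0 < r := Real.sqrt_pos.2 (by positivity)
  rw [← hs]
  field_simp

lemma integrable_abs_mul_gpdf : Integrable (fun z => |z| * gpdf z) := by
  have h := ((integrable_mul_exp_neg_mul_sq (by norm_num : (0:ℝ) < 1 / 2)).abs).const_mul
    (Real.sqrt (2 * Real.pi))⁻¹
  refine h.congr (Filter.Eventually.of_forall fun z => ?_)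
  show (Real.sqrt (2 * Real.pi))⁻¹ * |z * Real.exp (-(1 / 2) * z ^ 2)| = |z| * gpdf z
  rw [abs_mul, abs_of_pos (Real.exp_pos _)]
  unfold gpdf
  rw [show -(1 / 2 : ℝ) * z ^ 2 = -z ^ 2 / 2 by ring]
  ring

lemma ibp_eval (a : ℝ) :
    ∫ z, z * Phi0 (a * z) * gpdf (a * z) * gpdf z
      = a / (1 + a ^ 2) * (1 / (2 * Real.pi * Real.sqrt (1 + 2 * a ^ 2))) := by
  set c : ℝ := (Real.sqrt (2 * Real.pi))⁻¹ with hc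
  have hcpos : 0 < c := by rw [hc]; positivity
  set f : ℝ → ℝ := fun z => Phi0 (a * z) * gpdf (a * z) * gpdf z with hf
  set f' : ℝ → ℝ := fun z =>
    a * (gpdf (a * z) ^ 2 * gpdf z) - (1 + a ^ 2) * (z * Phi0 (a * z) * gpdf (a * z) * gpdf z)
    with hf'
  have hΦφ : ∀ t, Phi0 t * gpdf t ≤ c :=
    fun t => le_trans (mul_le_of_le_one_left (gpdf_nonneg t) (Phi0_le_one t)) (gpdf_le t)
  have hΦφ0 : ∀ t, 0 ≤ Phi0 t * gpdf t := fun t => mul_nonneg (Phi0_nonneg t) (gpdf_nonneg t)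
  have hderiv : ∀ z, HasDerivAt f (f' z) z := by
    intro z
    have h1 : HasDerivAt (fun z => Phi0 (a * z)) (gpdf (a * z) * a) z :=
      (hasDerivAt_Phi0 (a * z)).comp z (by simpa using (hasDerivAt_id z).const_mul a)
    have h2 : HasDerivAt (fun z => gpdf (a * z)) (-(a * z) * gpdf (a * z) * a) z :=
      (hasDerivAt_gpdf (a * z)).comp z (by simpa using (hasDerivAt_id z).const_mul a)
    have h3 := hasDerivAt_gpdf z
    have := (h1.mul h2).mul h3
    refine this.congr_deriv ?_
    simp only [hf', Pi.mul_apply]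
    ring
  have hca : Continuous fun z : ℝ => a * z := continuous_const.mul continuous_id
  have hcont : Continuous f :=
    ((continuous_Phi0.comp hca).mul (continuous_gpdf.comp hca)).mul continuous_gpdf
  have hint_f : Integrable f := by
    refine (integrable_gpdf.const_mul c).mono' hcont.aestronglyMeasurable
      (Filter.Eventually.of_forall fun z => ?_)
    rw [Real.norm_eq_abs, abs_of_nonneg (mul_nonneg (hΦφ0 (a * z)) (gpdf_nonneg z))]
    exact mul_le_mul_of_nonneg_right (hΦφ (a * z)) (gpdf_nonneg z)
  have hint2 : Integrable (fun z => z * Phi0 (a * z) * gpdf (a * z) * gpdf z) := by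
    refine (integrable_abs_mul_gpdf.const_mul c).mono'
      ((((continuous_id.mul (continuous_Phi0.comp hca)).mul
        (continuous_gpdf.comp hca)).mul continuous_gpdf).aestronglyMeasurable)
      (Filter.Eventually.of_forall fun z => ?_)
    rw [Real.norm_eq_abs]
    have habs : |z * Phi0 (a * z) * gpdf (a * z) * gpdf z|
        = |z| * (Phi0 (a * z) * gpdf (a * z)) * gpdf z := by
      rw [abs_mul, abs_mul, abs_mul, abs_of_nonneg (Phi0_nonneg _),
        abs_of_nonneg (gpdf_nonneg _), abs_of_nonneg (gpdf_nonneg _)]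
      ring
    rw [habs]
    calc |z| * (Phi0 (a * z) * gpdf (a * z)) * gpdf z
        ≤ |z| * c * gpdf z :=
          mul_le_mul_of_nonneg_right
            (mul_le_mul_of_nonneg_left (hΦφ _) (abs_nonneg z)) (gpdf_nonneg z)
      _ = c * (|z| * gpdf z) := by ring
  have hint_f' : Integrable f' :=
    ((integrable_gpdf_sq_mul a).const_mul a).sub (hint2.const_mul (1 + a ^ 2))
  have hzero : ∫ z, f' z = 0 :=
    integral_eq_zero_of_hasDerivAt_of_integrable hderiv hint_f' hint_f
  have hsplit : ∫ z, f' z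
      = a * (∫ z, gpdf (a * z) ^ 2 * gpdf z)
        - (1 + a ^ 2) * ∫ z, z * Phi0 (a * z) * gpdf (a * z) * gpdf z := by
    simp only [hf']
    rw [integral_sub ((integrable_gpdf_sq_mul a).const_mul a) (hint2.const_mul _),
      integral_const_mul, integral_const_mul]
  rw [hzero, I1_eval a] at hsplit
  have h1a : (0:ℝ) < 1 + a ^ 2 := by positivity
  rw [div_mul_eq_mul_div, eq_div_iff h1a.ne']
  linarith

lemma key_integral (a : ℝ) :
    ∫ z, gpdf z * (2 * Phi0 (a * z) * gpdf (a * z) * z)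
      = a / (Real.pi * (1 + a ^ 2) * Real.sqrt (1 + 2 * a ^ 2)) := by
  have h : (fun z => gpdf z * (2 * Phi0 (a * z) * gpdf (a * z) * z))
      = fun z => 2 * (z * Phi0 (a * z) * gpdf (a * z) * gpdf z) := by
    funext z; ring
  rw [h, integral_const_mul, ibp_eval a]
  have h1a : (0:ℝ) < 1 + a ^ 2 := by positivity
  have hr : (0:ℝ) < Real.sqrt (1 + 2 * a ^ 2) := Real.sqrt_pos.2 (by positivity)
  field_simp

lemma hasDerivAt_F (a : ℝ) :
    HasDerivAt (fun x => ∫ z, (Phi0 (x * z)) ^ 2 ∂(gaussianReal 0 1))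
      (a / (Real.pi * (1 + a ^ 2) * Real.sqrt (1 + 2 * a ^ 2))) a := by
  set c : ℝ := (Real.sqrt (2 * Real.pi))⁻¹ with hc
  have main := hasDerivAt_integral_of_dominated_loc_of_deriv_le
    (μ := gaussianReal 0 1) (F := fun x z => (Phi0 (x * z)) ^ 2)
    (F' := fun x z => 2 * Phi0 (x * z) * gpdf (x * z) * z)
    (bound := fun z => 2 * c * |z|) (x₀ := a) (s := Metric.ball a 1) (Metric.ball_mem_nhds a one_pos)
    ?_ ?_ ?_ ?_ ?_ ?_
  · rw [integral_gauss, key_integral a] at main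
    exact main.2
  · exact Filter.Eventually.of_forall fun x =>
      (((continuous_Phi0.comp (continuous_const.mul continuous_id)).pow 2).aestronglyMeasurable)
  · refine (integrable_const (1:ℝ)).mono'
      (((continuous_Phi0.comp (continuous_const.mul continuous_id)).pow 2).aestronglyMeasurable)
      (Filter.Eventually.of_forall fun z => ?_)
    rw [Real.norm_eq_abs, abs_of_nonneg (by positivity)]
    calc (Phi0 (a * z)) ^ 2 ≤ 1 ^ 2 := by
          gcongr
          exacts [Phi0_nonneg _, Phi0_le_one _]
      _ = 1 := one_pow 2
  · exact ((((continuous_const.mul (continuous_Phi0.comp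
      (continuous_const.mul continuous_id))).mul
      (continuous_gpdf.comp (continuous_const.mul continuous_id))).mul
      continuous_id).aestronglyMeasurable)
  · refine Filter.Eventually.of_forall fun z => fun x _ => ?_
    rw [Real.norm_eq_abs]
    have h1 : |2 * Phi0 (x * z) * gpdf (x * z) * z|
        = 2 * (Phi0 (x * z) * gpdf (x * z)) * |z| := by
      rw [abs_mul, abs_mul, abs_mul, abs_of_nonneg (Phi0_nonneg _),
        abs_of_nonneg (gpdf_nonneg _), abs_two]
      ring
    rw [h1]
    show 2 * (Phi0 (x * z) * gpdf (x * z)) * |z| ≤ 2 * c * |z|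
    have h2 : Phi0 (x * z) * gpdf (x * z) ≤ c :=
      le_trans (mul_le_of_le_one_left (gpdf_nonneg _) (Phi0_le_one _)) (gpdf_le _)
    have h3 : 0 ≤ Phi0 (x * z) * gpdf (x * z) :=
      mul_nonneg (Phi0_nonneg _) (gpdf_nonneg _)
    nlinarith [abs_nonneg z]
  · refine integrable_gauss ?_
    have h := (integrable_abs_mul_gpdf.const_mul (2 * c))
    refine h.congr (Filter.Eventually.of_forall fun z => ?_)
    show 2 * c * (|z| * gpdf z) = gpdf z * (2 * c * |z|)
    ring
  · refine Filter.Eventually.of_forall fun z => fun x _ => ?_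
    have h1 : HasDerivAt (fun x => Phi0 (x * z)) (gpdf (x * z) * z) x :=
      by have := (hasDerivAt_Phi0 (x * z)).comp x (hasDerivAt_mul_const z); exact this
    have := h1.pow 2
    refine this.congr_deriv ?_
    ring

lemma hasDerivAt_G (a : ℝ) :
    HasDerivAt (fun x : ℝ => 1 / 4 + (1 / (2 * Real.pi)) * Real.arcsin (x ^ 2 / (1 + x ^ 2)))
      (a / (Real.pi * (1 + a ^ 2) * Real.sqrt (1 + 2 * a ^ 2))) a := by
  have hden : (0:ℝ) < 1 + a ^ 2 := by positivity
  have hu : HasDerivAt (fun x : ℝ => x ^ 2 / (1 + x ^ 2)) (2 * a / (1 + a ^ 2) ^ 2) a := by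
    have h := (hasDerivAt_pow 2 a).div ((hasDerivAt_pow 2 a).const_add 1) (ne_of_gt hden)
    refine h.congr_deriv ?_
    field_simp
    ring
  have hlt : a ^ 2 / (1 + a ^ 2) < 1 := (div_lt_one hden).2 (by nlinarith)
  have hnn : (0:ℝ) ≤ a ^ 2 / (1 + a ^ 2) := by positivity
  have hgt : (-1:ℝ) < a ^ 2 / (1 + a ^ 2) := lt_of_lt_of_le (by norm_num) hnn
  have harc := Real.hasDerivAt_arcsin hgt.ne' (ne_of_lt hlt)
  have hcomp := (harc.comp a hu).const_mul (1 / (2 * Real.pi))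
  have hfinal := hcomp.const_add (1 / 4 : ℝ)
  refine hfinal.congr_deriv ?_
  have hs : Real.sqrt (1 - (a ^ 2 / (1 + a ^ 2)) ^ 2)
      = Real.sqrt (1 + 2 * a ^ 2) / (1 + a ^ 2) := by
    rw [show (1:ℝ) - (a ^ 2 / (1 + a ^ 2)) ^ 2 = (1 + 2 * a ^ 2) / (1 + a ^ 2) ^ 2 by
        field_simp; ring,
      Real.sqrt_div (by positivity), Real.sqrt_sq hden.le]
  rw [hs]
  have hr : (0:ℝ) < Real.sqrt (1 + 2 * a ^ 2) := Real.sqrt_pos.2 (by positivity)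
  field_simp


end GaussianCdfSqMomentAux

open Real Filter Set in

/-- Owen's formula 2,010.3: for `Z ∼ N(0,1)` and `Φ` the standard Gaussian CDF,
`E[Φ(aZ)²] = 1/4 + (1/(2π)) arcsin(a²/(1+a²))`. -/
theorem gaussian_cdf_sq_moment
    (a : ℝ) (Φ : ℝ → ℝ)
    (hΦ : Φ = fun t => ((gaussianReal 0 1) (Set.Iic t)).toReal) :
    ∫ z, (Φ (a * z)) ^ 2 ∂(gaussianReal 0 1)
      = 1 / 4 + (1 / (2 * Real.pi)) * Real.arcsin (a ^ 2 / (1 + a ^ 2)) := by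
  have hP : Φ = Phi0 := by rw [hΦ]; exact Phi_eq_Phi0
  rw [hP]
  have hconst := is_const_of_deriv_eq_zero
    (f := fun y : ℝ => (∫ z, (Phi0 (y * z)) ^ 2 ∂(gaussianReal 0 1))
      - (1 / 4 + (1 / (2 * Real.pi)) * Real.arcsin (y ^ 2 / (1 + y ^ 2))))
    (fun x => ((hasDerivAt_F x).sub (hasDerivAt_G x)).differentiableAt)
    (fun x => by exact (((hasDerivAt_F x).sub (hasDerivAt_G x)).deriv).trans (sub_self _)) a 0
  have hF0 : (∫ z, (Phi0 ((0:ℝ) * z)) ^ 2 ∂(gaussianReal 0 1)) = 1 / 4 := by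
    have h : ∀ z : ℝ, (Phi0 ((0:ℝ) * z)) ^ 2 = 1 / 4 := by
      intro z; rw [zero_mul, Phi0_zero]; norm_num
    simp_rw [h]
    rw [integral_const]
    simp [measure_univ]
  have hG0 : (1:ℝ) / 4 + (1 / (2 * Real.pi)) * Real.arcsin ((0:ℝ) ^ 2 / (1 + (0:ℝ) ^ 2))
      = 1 / 4 := by
    norm_num
  rw [hF0, hG0] at hconst
  linarith
end
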